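/- arXiv:2210.01554 — 5 statements merged into one kernel-verified Lean document; each statement's English description precedes it below -/
import Mathlib

section
/- Let $g\in\mathcal{C}^l([0,1])$ with $l\geq 2$, let $a\in\{1,\dots,l-1\}$, let $\kappa\in\mathbb{R}^l$ have distinct entries, and let $w=A_\kappa^{-1}e^{(a)}$ where $e^{(a)}\in\mathbb{R}^l$ has $a!$ in position $a+1$ and zeros elsewhere, and $A_\kappa$ is the Vandermonde matrix with $(A_\kappa)_{i,j}=\kappa_j^{i-1}$. Then for any $x\in[0,1]$ and $h>0$ with $x+\kappa_j h\in(0,1)$ for all $j$, we have $\left|h^{-a}\sum_{j=1}^l w_j g(x+\kappa_j h)-g^{(a)}(x)\right|\leq h^{l-a}\,\|g^{(l)}\|_\infty\sum_{j=1}^l|w_j\kappa_j^l|$. -/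
open Set

lemma taylor_two_sided {f : ℝ → ℝ} {C : ℝ} (n : ℕ)
    (hf : ContDiffOn ℝ (n + 1 : ℕ) f (Icc 0 1))
    (hC : ∀ y ∈ Icc (0:ℝ) 1, |iteratedDerivWithin (n+1) f (Icc 0 1) y| ≤ C)
    {x₀ y : ℝ} (hx₀ : x₀ ∈ Icc (0:ℝ) 1) (hy : y ∈ Icc (0:ℝ) 1) :
    |f y - taylorWithinEval f n (Icc 0 1) x₀ y| ≤ C * |y - x₀| ^ (n + 1) := by
  have h01 : (0:ℝ) < 1 := one_pos
  have hC0 : 0 ≤ C := (abs_nonneg _).trans (hC 0 ⟨le_refl 0, zero_le_one⟩)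
  have hf' : DifferentiableOn ℝ (iteratedDerivWithin n f (Icc 0 1)) (Icc 0 1) :=
    hf.differentiableOn_iteratedDerivWithin (mod_cast n.lt_succ_self) (uniqueDiffOn_Icc h01)
  have A : ∀ t ∈ Icc (0:ℝ) 1, HasDerivWithinAt (fun z => taylorWithinEval f n (Icc 0 1) z y)
      (((n.factorial : ℝ)⁻¹ * (y - t) ^ n) • iteratedDerivWithin (n+1) f (Icc 0 1) t) (Icc 0 1) t :=
    fun t ht => hasDerivWithinAt_taylorWithinEval
      (uniqueDiffOn_Icc h01) self_mem_nhdsWithin ht rfl.subset (hf.of_le (by exact_mod_cast n.le_succ)) (hf' t ht)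
  have hfac : ((n.factorial : ℝ))⁻¹ ≤ 1 := by
    rw [inv_le_one_iff₀]
    right
    exact_mod_cast n.factorial_pos
  rcases le_total x₀ y with hxy | hxy
  · have hsub : Icc x₀ y ⊆ Icc (0:ℝ) 1 := Icc_subset_Icc hx₀.1 hy.2
    have bound : ∀ t ∈ Ico x₀ y,
        ‖((n.factorial : ℝ)⁻¹ * (y - t) ^ n) • iteratedDerivWithin (n+1) f (Icc 0 1) t‖
          ≤ C * |y - x₀| ^ n := by
      intro t ht
      rw [norm_smul, Real.norm_eq_abs, Real.norm_eq_abs, abs_mul, abs_pow]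
      have h1 : |y - t| ≤ |y - x₀| := by
        rw [abs_of_nonneg (by linarith [ht.2.le] : (0:ℝ) ≤ y - t),
          abs_of_nonneg (by linarith : (0:ℝ) ≤ y - x₀)]
        linarith [ht.1]
      calc |(n.factorial : ℝ)⁻¹| * |y - t| ^ n * |iteratedDerivWithin (n+1) f (Icc 0 1) t|
          ≤ 1 * |y - x₀| ^ n * C := by
            gcongr
            · rw [abs_of_nonneg (by positivity)]; exact hfac
            · exact hC t (hsub ⟨ht.1, ht.2.le⟩)
        _ = C * |y - x₀| ^ n := by ring
    have key := norm_image_sub_le_of_norm_deriv_le_segment'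
      (fun t ht => (A t (hsub ht)).mono hsub) bound y (right_mem_Icc.2 hxy)
    simp only [taylorWithinEval_self, Real.norm_eq_abs] at key
    calc |f y - taylorWithinEval f n (Icc 0 1) x₀ y| ≤ C * |y - x₀| ^ n * (y - x₀) := key
      _ = C * |y - x₀| ^ (n+1) := by
          rw [pow_succ, abs_of_nonneg (by linarith : (0:ℝ) ≤ y - x₀)]; ring
  · have hsub : Icc y x₀ ⊆ Icc (0:ℝ) 1 := Icc_subset_Icc hy.1 hx₀.2
    have bound : ∀ t ∈ Ico y x₀,
        ‖((n.factorial : ℝ)⁻¹ * (y - t) ^ n) • iteratedDerivWithin (n+1) f (Icc 0 1) t‖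
          ≤ C * |y - x₀| ^ n := by
      intro t ht
      rw [norm_smul, Real.norm_eq_abs, Real.norm_eq_abs, abs_mul, abs_pow]
      have h1 : |y - t| ≤ |y - x₀| := by
        rw [abs_sub_comm y t, abs_sub_comm y x₀,
          abs_of_nonneg (by linarith [ht.1] : (0:ℝ) ≤ t - y),
          abs_of_nonneg (by linarith : (0:ℝ) ≤ x₀ - y)]
        linarith [ht.2.le]
      calc |(n.factorial : ℝ)⁻¹| * |y - t| ^ n * |iteratedDerivWithin (n+1) f (Icc 0 1) t|
          ≤ 1 * |y - x₀| ^ n * C := by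
            gcongr
            · rw [abs_of_nonneg (by positivity)]; exact hfac
            · exact hC t (hsub ⟨ht.1, ht.2.le⟩)
        _ = C * |y - x₀| ^ n := by ring
    have key := norm_image_sub_le_of_norm_deriv_le_segment'
      (fun t ht => (A t (hsub ht)).mono hsub) bound x₀ (right_mem_Icc.2 hxy)
    simp only [taylorWithinEval_self, Real.norm_eq_abs] at key
    rw [abs_sub_comm]
    calc |taylorWithinEval f n (Icc 0 1) x₀ y - f y| ≤ C * |y - x₀| ^ n * (x₀ - y) := key
      _ = C * |y - x₀| ^ (n+1) := by
          rw [pow_succ, abs_sub_comm, abs_of_nonneg (by linarith : (0:ℝ) ≤ x₀ - y)]; ring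

/-- Lemma on numerical differentiation: for `g ∈ C^l([0,1])`, `l ≥ 2`, `a ∈ {1,…,l-1}`,
distinct nodes `κ ∈ ℝ^l`, and weights `w = A_κ⁻¹ e^{(a)}` (where `e^{(a)}` has `a!` in
position `a+1` and zeros elsewhere), if `x ∈ [0,1]`, `h > 0` and `x + κ_j h ∈ (0,1)` for
all `j`, then `|h^{-a} ∑_j w_j g(x + κ_j h) - g^{(a)}(x)| ≤ h^{l-a} ‖g^{(l)}‖_∞ ∑_j |w_j κ_j^l|`. -/
theorem stmt_1 (l : ℕ) (hl : 2 ≤ l) (g : ℝ → ℝ)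
    (hg : ContDiffOn ℝ (l : ℕ∞) g (Set.Icc 0 1))
    (a : ℕ) (ha : 1 ≤ a) (ha' : a ≤ l - 1)
    (κ : Fin l → ℝ) (hκ : Function.Injective κ)
    (e w : Fin l → ℝ)
    (he : ∀ i : Fin l, e i = if (i : ℕ) = a then (a.factorial : ℝ) else 0)
    (hw : w = (Matrix.of fun i j : Fin l => κ j ^ (i : ℕ))⁻¹.mulVec e)
    (M : ℝ)
    (hM : ∀ x ∈ Set.Icc (0 : ℝ) 1, |iteratedDerivWithin l g (Set.Icc 0 1) x| ≤ M)
    (x : ℝ) (hx : x ∈ Set.Icc (0 : ℝ) 1) (h : ℝ) (hh : 0 < h)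
    (hxk : ∀ j, x + κ j * h ∈ Set.Ioo (0 : ℝ) 1) :
    |(∑ j, w j * g (x + κ j * h)) / h ^ a
        - iteratedDerivWithin a g (Set.Icc 0 1) x|
      ≤ h ^ (l - a) * M * ∑ j, |w j * κ j ^ l| := by
  obtain ⟨m, rfl⟩ : ∃ m, l = m + 1 := ⟨l - 1, by omega⟩
  have ham : a ≤ m := by omega
  have hM0 : 0 ≤ M := (abs_nonneg _).trans (hM 0 ⟨le_refl 0, zero_le_one⟩)
  have hg' : ContDiffOn ℝ (m + 1 : ℕ) g (Icc 0 1) := by exact_mod_cast hg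
  -- Vandermonde: the matrix A is invertible and A.mulVec w = e
  set A : Matrix (Fin (m+1)) (Fin (m+1)) ℝ := Matrix.of fun i j : Fin (m+1) => κ j ^ (i : ℕ)
    with hAdef
  have hdet : IsUnit A.det := by
    have hAt : A = (Matrix.vandermonde κ).transpose := by
      ext i j
      simp [hAdef, Matrix.vandermonde, Matrix.transpose_apply]
    rw [hAt, Matrix.det_transpose]
    exact isUnit_iff_ne_zero.mpr (Matrix.det_vandermonde_ne_zero_iff.mpr hκ)
  have hAw : A.mulVec w = e := by
    rw [hw, Matrix.mulVec_mulVec, Matrix.mul_nonsing_inv A hdet, Matrix.one_mulVec]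
  have hsum : ∀ k : Fin (m+1), ∑ j, w j * κ j ^ (k : ℕ) = e k := by
    intro k
    have h2 := congrFun hAw k
    simp only [Matrix.mulVec, dotProduct, hAdef, Matrix.of_apply] at h2
    rw [← h2]
    exact Finset.sum_congr rfl fun j _ => mul_comm _ _
  -- Taylor remainders
  set s : Set ℝ := Icc (0:ℝ) 1 with hs
  set T : Fin (m+1) → ℝ := fun j => taylorWithinEval g m s x (x + κ j * h) with hT
  set R : Fin (m+1) → ℝ := fun j => g (x + κ j * h) - T j with hR
  have hRbound : ∀ j, |R j| ≤ M * (|κ j| * h) ^ (m + 1) := by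
    intro j
    have h3 := taylor_two_sided m hg' hM hx (Ioo_subset_Icc_self (hxk j))
    calc |R j| ≤ M * |x + κ j * h - x| ^ (m + 1) := h3
      _ = M * (|κ j| * h) ^ (m + 1) := by
          rw [add_sub_cancel_left, abs_mul, abs_of_pos hh]
  -- The Taylor polynomial part sums to h^a * D^a g x
  have key : ∑ j, w j * T j = h ^ a * iteratedDerivWithin a g s x := by
    have expand : ∀ j, w j * T j = ∑ k ∈ Finset.range (m+1),
        (k.factorial : ℝ)⁻¹ * h ^ k * iteratedDerivWithin k g s x * (w j * κ j ^ k) := by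
      intro j
      show w j * taylorWithinEval g m s x (x + κ j * h) = _
      rw [taylor_within_apply, Finset.mul_sum]
      refine Finset.sum_congr rfl fun k _ => ?_
      rw [add_sub_cancel_left, smul_eq_mul, mul_pow]
      ring
    rw [Finset.sum_congr rfl fun j _ => expand j, Finset.sum_comm]
    rw [← Fin.sum_univ_eq_sum_range (fun k => ∑ j : Fin (m+1),
        (k.factorial : ℝ)⁻¹ * h ^ k * iteratedDerivWithin k g s x * (w j * κ j ^ k))]
    have step : ∀ k : Fin (m+1), (∑ j : Fin (m+1),
        ((k:ℕ).factorial : ℝ)⁻¹ * h ^ (k:ℕ) * iteratedDerivWithin (k:ℕ) g s x * (w j * κ j ^ (k:ℕ)))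
        = ((k:ℕ).factorial : ℝ)⁻¹ * h ^ (k:ℕ) * iteratedDerivWithin (k:ℕ) g s x * e k := by
      intro k
      rw [← Finset.mul_sum, hsum k]
    rw [Finset.sum_congr rfl fun k _ => step k]
    rw [Finset.sum_eq_single_of_mem (⟨a, by omega⟩ : Fin (m+1)) (Finset.mem_univ _)]
    · rw [he]
      have hfa : ((⟨a, by omega⟩ : Fin (m+1)) : ℕ) = a := rfl
      rw [hfa, if_pos rfl]
      have hfac : (a.factorial : ℝ) ≠ 0 := by
        exact_mod_cast a.factorial_pos.ne'
      field_simp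
      try ring
    · intro k _ hka
      rw [he]
      have hk2 : (k:ℕ) ≠ a := by
        intro hc
        exact hka (Fin.ext hc)
      simp [hk2]
  -- Put it together
  have hsplit : ∑ j, w j * g (x + κ j * h)
      = h ^ a * iteratedDerivWithin a g s x + ∑ j, w j * R j := by
    rw [← key, ← Finset.sum_add_distrib]
    refine Finset.sum_congr rfl fun j _ => ?_
    rw [hR]
    ring
  have hha : (0:ℝ) < h ^ a := pow_pos hh a
  rw [hsplit]
  have lhs_eq : |(h ^ a * iteratedDerivWithin a g s x + ∑ j, w j * R j) / h ^ a
      - iteratedDerivWithin a g s x| = |∑ j, w j * R j| / h ^ a := by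
    rw [add_div, mul_div_cancel_left₀ _ (ne_of_gt hha), add_sub_cancel_left, abs_div,
      abs_of_pos hha]
  rw [lhs_eq, div_le_iff₀ hha]
  have hpow : h ^ (m+1) = h ^ (m + 1 - a) * h ^ a := by
    rw [← pow_add]
    congr 1
    omega
  calc |∑ j, w j * R j| ≤ ∑ j, |w j * R j| := Finset.abs_sum_le_sum_abs _ _
    _ ≤ ∑ j, |w j * κ j ^ (m+1)| * (M * h ^ (m+1)) := by
        refine Finset.sum_le_sum fun j _ => ?_
        rw [abs_mul, abs_mul, abs_pow]
        calc |w j| * |R j| ≤ |w j| * (M * (|κ j| * h) ^ (m+1)) :=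
              mul_le_mul_of_nonneg_left (hRbound j) (abs_nonneg _)
          _ = |w j| * |κ j| ^ (m+1) * (M * h ^ (m+1)) := by
              rw [mul_pow]; ring
    _ = (∑ j, |w j * κ j ^ (m+1)|) * (M * h ^ (m+1)) := by rw [← Finset.sum_mul]
    _ = (h ^ (m + 1 - a) * M * ∑ j, |w j * κ j ^ (m+1)|) * h ^ a := by
        rw [hpow]; ring
end

section
/- Let $r\geq 1$, let $(\lambda_j)_{j=1}^r$ be the sequence $1,-1,3,-3,\dots$ and let $\gamma^{(r)}$ be the unique coefficients with $\sum_j\gamma_j^{(r)}\lambda_j^i=\mathbf{1}\{i=0\}$ for $0\leq i\leq r-1$. Then for any $\bar{f}\in\mathcal{C}^r(\mathbb{R}^s)$ with $\|\bar f\|_r=\max_{|\alpha|=r}\sup_x|D^\alpha\bar f(x)|<\infty$, any $c\in\mathbb{R}^s$ and any $u\in\mathbb{R}^s$, $\left|\sum_{j=1}^r\gamma_j^{(r)}\bar f(c+\lambda_j u)-\bar f(c)\right|\leq \|\bar f\|_r\left(\sum_{j=1}^r|\gamma_j^{(r)}||\lambda_j|^r\right)\sum_{|\alpha|=r}\frac{|u^\alpha|}{\alpha!}$.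 -/
open Finset

section helpers

variable {E G : Type*} [NormedAddCommGroup E] [NormedSpace ℝ E]
  [NormedAddCommGroup G] [NormedSpace ℝ G]

private lemma my_fderiv_comp_const_add (g : E → G) (a x : E) :
    fderiv ℝ (fun y => g (a + y)) x = fderiv ℝ g (a + x) := by
  by_cases hg : DifferentiableAt ℝ g (a + x)
  · have h1 : HasFDerivAt (fun y : E => a + y) (ContinuousLinearMap.id ℝ E) x := by
      simpa using (hasFDerivAt_id x).const_add a
    have := (hg.hasFDerivAt.comp x h1).fderiv
    simpa [Function.comp_def] using this
  · have h2 : ¬ DifferentiableAt ℝ (fun y => g (a + y)) x := by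
      intro h
      have h3 : DifferentiableAt ℝ (fun z : E => z - a) (a + x) :=
        (differentiable_id.sub_const a) _
      have h4 : DifferentiableAt ℝ (fun y => g (a + y)) ((fun z : E => z - a) (a + x)) := by
        simpa using h
      have h5 := h4.comp (a + x) h3
      apply hg
      have heq : ((fun y => g (a + y)) ∘ (fun z : E => z - a)) = g := by
        funext z; simp
      rwa [heq] at h5
    rw [fderiv_zero_of_not_differentiableAt hg, fderiv_zero_of_not_differentiableAt h2]

private lemma my_iteratedFDeriv_comp_const_add (i : ℕ) (g : E → G) (a : E) :
    iteratedFDeriv ℝ i (fun y => g (a + y)) = fun x => iteratedFDeriv ℝ i g (a + x) := by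
  induction i with
  | zero => funext x; ext m; simp
  | succ i IH =>
    funext x; ext m
    rw [iteratedFDeriv_succ_apply_left, iteratedFDeriv_succ_apply_left, IH,
      my_fderiv_comp_const_add (iteratedFDeriv ℝ i g) a x]

private lemma my_itdw_eq (g : ℝ → ℝ) {n : ℕ} (hg : ContDiff ℝ (n : ℕ∞) g) {m : ℕ} (hm : m ≤ n)
    {s : Set ℝ} (hs : UniqueDiffOn ℝ s) {y : ℝ} (hy : y ∈ s) :
    iteratedDerivWithin m g s y = iteratedDeriv m g y := by
  have h1 := (contDiff_iff_ftaylorSeries.mp hg).hasFTaylorSeriesUpToOn s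
  have h2 := h1.eq_iteratedFDerivWithin_of_uniqueDiffOn (by exact_mod_cast hm) hs hy
  rw [iteratedDerivWithin_eq_iteratedFDerivWithin, ← h2]
  rfl

private lemma my_taylor_bound_nonneg (g : ℝ → ℝ) (n : ℕ)
    (hg : ContDiff ℝ ((n + 1 : ℕ) : ℕ∞) g) (K : ℝ)
    (hK : ∀ t, |iteratedDeriv (n + 1) g t| ≤ K) {x : ℝ} (hx : 0 ≤ x) :
    |g x - ∑ i ∈ Finset.range (n + 1), iteratedDeriv i g 0 * x ^ i / i.factorial|
      ≤ K * x ^ (n + 1) / (n + 1).factorial := by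
  rcases hx.eq_or_lt with h0 | h0
  · subst h0
    have hsum : ∑ i ∈ Finset.range (n + 1),
        iteratedDeriv i g 0 * (0 : ℝ) ^ i / i.factorial = g 0 := by
      rw [Finset.sum_eq_single_of_mem 0 (Finset.mem_range.mpr (Nat.succ_pos n))]
      · simp
      · intro i _ hi
        simp [zero_pow hi]
    rw [hsum]
    simp
  · have hgn : ContDiffOn ℝ (n : ℕ∞) g (Set.Icc 0 x) :=
      (hg.of_le (by exact_mod_cast Nat.le_succ n)).contDiffOn
    have hUD : UniqueDiffOn ℝ (Set.Icc (0 : ℝ) x) := uniqueDiffOn_Icc h0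
    have heq : ∀ m : ℕ, m ≤ n + 1 → ∀ y ∈ Set.Icc (0 : ℝ) x,
        iteratedDerivWithin m g (Set.Icc 0 x) y = iteratedDeriv m g y :=
      fun m hm y hy => my_itdw_eq g hg hm hUD hy
    have hdiffable : Differentiable ℝ (iteratedDeriv n g) :=
      ContDiff.differentiable_iteratedDeriv n hg (by exact_mod_cast Nat.lt_succ_self n)
    have hdiff : DifferentiableOn ℝ (iteratedDerivWithin n g (Set.Icc 0 x)) (Set.Ioo 0 x) :=
      (hdiffable.differentiableOn).congr
        (fun y hy => heq n (Nat.le_succ n) y (Set.Ioo_subset_Icc_self hy))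
    obtain ⟨x', hx', hT⟩ := taylor_mean_remainder_lagrange (n := n) h0.ne
      (by rw [Set.uIcc_of_le h0.le]; exact_mod_cast hgn)
      (by rw [Set.uIcc_of_le h0.le, Set.uIoo_of_le h0.le]; exact hdiff)
    rw [Set.uIoo_of_le h0.le] at hx'
    rw [Set.uIcc_of_le h0.le] at hT
    have hTay : taylorWithinEval g n (Set.Icc 0 x) 0 x
        = ∑ i ∈ Finset.range (n + 1), iteratedDeriv i g 0 * x ^ i / i.factorial := by
      rw [taylor_within_apply]
      refine Finset.sum_congr rfl fun i hi => ?_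
      rw [heq i (le_of_lt (Finset.mem_range.mp hi)) 0
        (Set.left_mem_Icc.mpr h0.le)]
      simp only [sub_zero, smul_eq_mul]
      ring
    rw [hTay] at hT
    rw [hT, heq (n + 1) le_rfl x' (Set.Ioo_subset_Icc_self hx')]
    rw [abs_div, abs_mul, abs_pow, abs_of_pos (sub_pos.mpr h0), abs_of_pos
      (by positivity : (0:ℝ) < ((n + 1).factorial : ℝ))]
    rw [sub_zero]
    gcongr
    exact hK x'

private lemma my_taylor_bound (g : ℝ → ℝ) (n : ℕ)
    (hg : ContDiff ℝ ((n + 1 : ℕ) : ℕ∞) g) (K : ℝ)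
    (hK : ∀ t, |iteratedDeriv (n + 1) g t| ≤ K) (x : ℝ) :
    |g x - ∑ i ∈ Finset.range (n + 1), iteratedDeriv i g 0 * x ^ i / i.factorial|
      ≤ K * |x| ^ (n + 1) / (n + 1).factorial := by
  rcases le_or_gt 0 x with hx | hx
  · rw [abs_of_nonneg hx]
    exact my_taylor_bound_nonneg g n hg K hK hx
  · set h : ℝ → ℝ := fun t => g (-t) with hh
    have hhg : ContDiff ℝ ((n + 1 : ℕ) : ℕ∞) h := hg.comp (contDiff_id.neg)
    have hKh : ∀ t, |iteratedDeriv (n + 1) h t| ≤ K := by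
      intro t
      rw [hh, iteratedDeriv_comp_neg]
      rw [smul_eq_mul, abs_mul, abs_pow, abs_neg, abs_one, one_pow, one_mul]
      exact hK (-t)
    have hx' : (0 : ℝ) ≤ -x := by linarith
    have hb := my_taylor_bound_nonneg h n hhg K hKh hx'
    have hsum : ∑ i ∈ Finset.range (n + 1), iteratedDeriv i h 0 * (-x) ^ i / i.factorial
        = ∑ i ∈ Finset.range (n + 1), iteratedDeriv i g 0 * x ^ i / i.factorial := by
      refine Finset.sum_congr rfl fun i _ => ?_
      rw [hh, iteratedDeriv_comp_neg, neg_zero, smul_eq_mul]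
      rw [show ((-1 : ℝ) ^ i * iteratedDeriv i g 0) * (-x) ^ i
        = iteratedDeriv i g 0 * ((-1) * (-x)) ^ i by rw [mul_pow]; ring]
      norm_num
    have hval : h (-x) = g x := by rw [hh]; simp
    rw [hval, hsum] at hb
    rwa [abs_of_neg hx]

end helpers

/-- Let `(λ_j)_{j=1}^r` be the sequence `1, -1, 3, -3, …` and let `γ^{(r)}` be the unique
coefficients with `∑_j γ_j λ_j^i = 𝟙{i=0}` for `0 ≤ i ≤ r-1`. For `f̄ ∈ C^r(ℝ^s)` with all
`r`-th order partial derivatives bounded by `M`, any `c, u ∈ ℝ^s`: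
`|∑_j γ_j f̄(c + λ_j u) - f̄(c)| ≤ M (∑_j |γ_j| |λ_j|^r) ∑_{|α|=r} |u^α|/α!`, where the
multi-index sum `∑_{|α|=r} |u^α|/α!` is written as `(∑_{m : Fin r → Fin s} ∏_p |u_{m(p)}|)/r!`. -/
theorem stmt_9 (s r : ℕ) (hs : 1 ≤ s) (hr : 1 ≤ r)
    (lam : Fin r → ℝ)
    (hlam : ∀ j : Fin r, lam j = (-1 : ℝ) ^ (j : ℕ) * (2 * (((j : ℕ) / 2 : ℕ) : ℝ) + 1))
    (γ : Fin r → ℝ)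
    (hγ : ∀ i : ℕ, i < r → ∑ j, γ j * lam j ^ i = if i = 0 then 1 else 0)
    (f : (Fin s → ℝ) → ℝ) (hf : ContDiff ℝ (r : ℕ∞) f)
    (M : ℝ)
    (hM : ∀ (x : Fin s → ℝ) (m : Fin r → Fin s),
      |iteratedFDeriv ℝ r f x (fun p => Pi.single (m p) 1)| ≤ M)
    (c u : Fin s → ℝ) :
    |(∑ j, γ j * f (c + lam j • u)) - f c|
      ≤ M * (∑ j, |γ j| * |lam j| ^ r) *
        ((∑ m : Fin r → Fin s, ∏ p, |u (m p)|) / (r.factorial : ℝ)) := by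
  -- setup
  set T : ℝ := ∑ m : Fin r → Fin s, ∏ p, |u (m p)| with hT
  set L : ℝ →L[ℝ] (Fin s → ℝ) := ContinuousLinearMap.toSpanSingleton ℝ u with hL
  set φ : ℝ → ℝ := fun t => f (c + t • u) with hφdef'
  have hφdef : φ = (fun y => f (c + y)) ∘ L := by
    funext t; simp [hφdef', hL, ContinuousLinearMap.toSpanSingleton_apply]
  have hcf : ContDiff ℝ (r : ℕ∞) (fun y => f (c + y)) :=
    hf.comp (contDiff_const.add contDiff_id)
  have hφ : ContDiff ℝ (r : ℕ∞) φ := by rw [hφdef]; exact hcf.comp L.contDiff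
  -- the iterated derivative of φ
  have hder : ∀ t : ℝ,
      iteratedDeriv r φ t = iteratedFDeriv ℝ r f (c + t • u) (fun _ => u) := by
    intro t
    rw [iteratedDeriv_eq_iteratedFDeriv, hφdef,
      L.iteratedFDeriv_comp_right hcf t (by norm_cast)]
    simp only [ContinuousMultilinearMap.compContinuousLinearMap_apply]
    rw [my_iteratedFDeriv_comp_const_add]
    simp [hL, ContinuousLinearMap.toSpanSingleton_apply]
  -- bound on the r-th directional derivative
  have hbound : ∀ x : Fin s → ℝ, |iteratedFDeriv ℝ r f x (fun _ => u)| ≤ M * T := by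
    intro x
    have hu0 : u = ∑ i : Fin s, u i • (Pi.single i (1 : ℝ) : Fin s → ℝ) := by
      funext j
      simp [Pi.single_apply, Finset.sum_apply, eq_comm]
    have hu' : (fun _ : Fin r => u)
        = fun _ : Fin r => ∑ i : Fin s, u i • (Pi.single i (1 : ℝ) : Fin s → ℝ) := by
      funext p; exact hu0
    rw [hu', ContinuousMultilinearMap.map_sum]
    refine (Finset.abs_sum_le_sum_abs _ _).trans ?_
    have hterm : ∀ m : Fin r → Fin s,
        |(iteratedFDeriv ℝ r f x) fun p => u (m p) • (Pi.single (m p) (1 : ℝ) : Fin s → ℝ)|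
          ≤ (∏ p, |u (m p)|) * M := by
      intro m
      rw [ContinuousMultilinearMap.map_smul_univ, smul_eq_mul, abs_mul, Finset.abs_prod]
      exact mul_le_mul_of_nonneg_left (hM x m) (Finset.prod_nonneg fun p _ => abs_nonneg _)
    refine (Finset.sum_le_sum fun m _ => hterm m).trans_eq ?_
    rw [hT, Finset.mul_sum]
    exact Finset.sum_congr rfl fun m _ => by ring
  have hK : ∀ t : ℝ, |iteratedDeriv r φ t| ≤ M * T := fun t => (hder t ▸ hbound (c + t • u))
  clear_value T
  -- write r = n + 1
  obtain ⟨n, rfl⟩ : ∃ n, r = n + 1 := ⟨r - 1, (Nat.succ_pred_eq_of_pos hr).symm⟩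
  -- Taylor bound for each j
  have hTay : ∀ j, |φ (lam j) - ∑ i ∈ Finset.range (n + 1),
      iteratedDeriv i φ 0 * lam j ^ i / i.factorial|
      ≤ M * T * |lam j| ^ (n + 1) / (n + 1).factorial :=
    fun j => my_taylor_bound φ n hφ (M * T) hK (lam j)
  -- value of the polynomial sum
  have hφ0 : φ 0 = f c := by simp [hφdef']
  have hP : ∑ j, γ j * (∑ i ∈ Finset.range (n + 1),
      iteratedDeriv i φ 0 * lam j ^ i / i.factorial) = f c := by
    have hswap : ∑ j, γ j * (∑ i ∈ Finset.range (n + 1),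
        iteratedDeriv i φ 0 * lam j ^ i / i.factorial)
        = ∑ i ∈ Finset.range (n + 1),
            (iteratedDeriv i φ 0 / i.factorial) * ∑ j, γ j * lam j ^ i := by
      simp_rw [Finset.mul_sum]
      rw [Finset.sum_comm]
      exact Finset.sum_congr rfl fun i _ => Finset.sum_congr rfl fun j _ => by ring
    rw [hswap]
    have hterms : ∀ i ∈ Finset.range (n + 1),
        (iteratedDeriv i φ 0 / i.factorial) * ∑ j, γ j * lam j ^ i
        = if i = 0 then φ 0 else 0 := by
      intro i hi
      rw [hγ i (Finset.mem_range.mp hi)]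
      split_ifs with h
      · subst h; simp
      · simp
    rw [Finset.sum_congr rfl hterms, Finset.sum_ite_eq' (Finset.range (n + 1)) 0 (fun _ => φ 0)]
    simp [hφ0]
  -- main computation
  have hmain : (∑ j, γ j * f (c + lam j • u)) - f c
      = ∑ j, γ j * (φ (lam j) - ∑ i ∈ Finset.range (n + 1),
          iteratedDeriv i φ 0 * lam j ^ i / i.factorial) := by
    simp_rw [mul_sub]
    rw [Finset.sum_sub_distrib, hP]
  rw [hmain]
  calc |∑ j, γ j * (φ (lam j) - ∑ i ∈ Finset.range (n + 1),
          iteratedDeriv i φ 0 * lam j ^ i / i.factorial)|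
      ≤ ∑ j, |γ j| * |φ (lam j) - ∑ i ∈ Finset.range (n + 1),
          iteratedDeriv i φ 0 * lam j ^ i / i.factorial| := by
        refine (Finset.abs_sum_le_sum_abs _ _).trans_eq ?_
        exact Finset.sum_congr rfl fun j _ => abs_mul _ _
    _ ≤ ∑ j, |γ j| * (M * T * |lam j| ^ (n + 1) / (n + 1).factorial) := by
        refine Finset.sum_le_sum fun j _ => ?_
        exact mul_le_mul_of_nonneg_left (hTay j) (abs_nonneg _)
    _ = M * (∑ j, |γ j| * |lam j| ^ (n + 1)) * (T / ((n + 1).factorial : ℝ)) := by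
        rw [Finset.mul_sum, Finset.sum_mul]
        exact Finset.sum_congr rfl fun j _ => by ring
end

section
/- Let $g\in L_1([0,1]^s)$, let $\lambda$ be an odd integer (possibly negative), let $k\geq 2$, $m\geq(|\lambda|-1)/2$ an integer, and extend $g$ to $\bar g:\mathbb{R}^s\to\mathbb{R}$ by zero outside $[0,1]^s$. With $\mathfrak{C}_{m,k}$ the set of centres $\left(\frac{2j_1+1}{2k},\dots,\frac{2j_s+1}{2k}\right)$, $(j_1,\dots,j_s)\in\{-m,\dots,k+m-1\}^s$, and independent $U_c\sim\mathcal{U}([-1/(2k),1/(2k)]^s)$, we have $\mathbb{E}\left[k^{-s}\sum_{c\in\mathfrak{C}_{m,k}}\bar g(c+\lambda U_c)\right]=\int_{[0,1]^s}g(u)\,du$. -/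
open MeasureTheory ProbabilityTheory

lemma count_1d (k m L : ℕ) (hk : 1 ≤ k) (hmL : L ≤ 2 * m + 1)
    (y : ℝ) (hy0 : 0 < y) (hy1 : y < 1) (hirr : ∀ n : ℤ, 2 * (k : ℝ) * y ≠ (n : ℝ)) :
    (∑ t ∈ Finset.Icc (-(m : ℤ)) ((k : ℤ) + m - 1),
      if (-(((L : ℝ)) / (2 * (k : ℝ))) ≤ y - (2 * (t : ℝ) + 1) / (2 * (k : ℝ)) ∧
          y - (2 * (t : ℝ) + 1) / (2 * (k : ℝ)) ≤ (L : ℝ) / (2 * (k : ℝ))) then (1 : ℝ) else 0)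
      = (L : ℝ) := by
  have hk0 : (0 : ℝ) < (k : ℝ) := by exact_mod_cast Nat.lt_of_lt_of_le Nat.zero_lt_one hk
  have h2k : (0 : ℝ) < 2 * (k : ℝ) := by linarith
  set b : ℝ := (2 * (k : ℝ) * y - 1 - (L : ℝ)) / 2 with hb
  have hbne : ∀ n : ℤ, b ≠ (n : ℝ) := by
    intro n h
    apply hirr (2 * n + 1 + (L : ℤ))
    push_cast
    rw [hb] at h
    linarith [h]
  have hcond : ∀ t : ℤ, ((-(((L : ℝ)) / (2 * (k : ℝ))) ≤ y - (2 * (t : ℝ) + 1) / (2 * (k : ℝ)) ∧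
          y - (2 * (t : ℝ) + 1) / (2 * (k : ℝ)) ≤ (L : ℝ) / (2 * (k : ℝ)))
      ↔ (b ≤ (t : ℝ) ∧ (t : ℝ) ≤ b + (L : ℝ))) := by
    intro t
    have e : y - (2 * (t : ℝ) + 1) / (2 * (k : ℝ))
        = (2 * (k : ℝ) * y - (2 * (t : ℝ) + 1)) / (2 * (k : ℝ)) := by
      field_simp
    rw [e, ← neg_div, div_le_div_iff_of_pos_right h2k, div_le_div_iff_of_pos_right h2k, hb]
    constructor
    · rintro ⟨h1, h2⟩
      constructor <;> linarith
    · rintro ⟨h1, h2⟩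
      constructor <;> linarith
  have hbfloor : (⌊b⌋ : ℝ) < b := lt_of_le_of_ne (Int.floor_le b) fun h => hbne ⌊b⌋ h.symm
  have hceil : ⌈b⌉ = ⌊b⌋ + 1 := by
    have h1 : ⌈b⌉ ≤ ⌊b⌋ + 1 := Int.ceil_le_floor_add_one b
    have h2 : ⌊b⌋ < ⌈b⌉ := by
      have := Int.le_ceil b
      exact_mod_cast lt_of_lt_of_le hbfloor this
    omega
  have hfloorL : ⌊b + (L : ℝ)⌋ = ⌊b⌋ + (L : ℤ) := by
    have : b + (L : ℝ) = b + ((L : ℤ) : ℝ) := by push_cast; ring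
    rw [this, Int.floor_add_intCast]
  have hcond2 : ∀ t : ℤ, ((b ≤ (t : ℝ) ∧ (t : ℝ) ≤ b + (L : ℝ)) ↔ (⌈b⌉ ≤ t ∧ t ≤ ⌈b⌉ + (L : ℤ) - 1)) := by
    intro t
    rw [← Int.ceil_le, ← Int.le_floor, hfloorL, hceil]
    omega
  have hlow : -(m : ℤ) ≤ ⌈b⌉ := by
    have h1 : (-(m : ℤ) - 1 : ℝ) < b := by
      rw [hb]
      push_cast
      have : (L : ℝ) ≤ 2 * m + 1 := by exact_mod_cast hmL
      nlinarith
    have := Int.lt_ceil.mpr (by exact_mod_cast h1 : ((-(m : ℤ) - 1 : ℤ) : ℝ) < b)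
    omega
  have hhigh : ⌈b⌉ + (L : ℤ) - 1 ≤ (k : ℤ) + m - 1 := by
    have h1 : b + (L : ℝ) < ((k : ℤ) + m : ℤ) := by
      rw [hb]
      push_cast
      have : (L : ℝ) ≤ 2 * m + 1 := by exact_mod_cast hmL
      nlinarith
    have := Int.floor_lt.mpr h1
    rw [hfloorL, hceil] at *
    omega
  have hrw : ∀ t ∈ Finset.Icc (-(m : ℤ)) ((k : ℤ) + m - 1),
      (if (-(((L : ℝ)) / (2 * (k : ℝ))) ≤ y - (2 * (t : ℝ) + 1) / (2 * (k : ℝ)) ∧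
          y - (2 * (t : ℝ) + 1) / (2 * (k : ℝ)) ≤ (L : ℝ) / (2 * (k : ℝ))) then (1 : ℝ) else 0)
      = (if t ∈ Finset.Icc ⌈b⌉ (⌈b⌉ + (L : ℤ) - 1) then (1 : ℝ) else 0) := by
    intro t _
    rw [if_congr (((hcond t).trans (hcond2 t)).trans (Finset.mem_Icc).symm) rfl rfl]
  rw [Finset.sum_congr rfl hrw, Finset.sum_ite_mem]
  have hsub : Finset.Icc (-(m : ℤ)) ((k : ℤ) + m - 1) ∩ Finset.Icc ⌈b⌉ (⌈b⌉ + (L : ℤ) - 1)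
      = Finset.Icc ⌈b⌉ (⌈b⌉ + (L : ℤ) - 1) := by
    apply Finset.inter_eq_right.mpr
    intro t ht
    rw [Finset.mem_Icc] at *
    omega
  rw [hsub, Finset.sum_const, Int.card_Icc]
  have : (⌈b⌉ + (L : ℤ) - 1 + 1 - ⌈b⌉) = (L : ℤ) := by ring
  rw [this]
  simp

lemma pi_unif_eq (s k : ℕ) (hk : 1 ≤ k) :
    (Measure.pi fun _ : Fin s =>
      (volume (Set.Icc (-(1 / (2 * (k : ℝ)))) (1 / (2 * (k : ℝ)))))⁻¹ •
        volume.restrict (Set.Icc (-(1 / (2 * (k : ℝ)))) (1 / (2 * (k : ℝ))))) =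
    (ENNReal.ofReal (k : ℝ)) ^ s •
      volume.restrict (Set.Icc (fun _ : Fin s => -(1 / (2 * (k : ℝ)))) fun _ => 1 / (2 * (k : ℝ))) := by
  have hk0 : (0 : ℝ) < (k : ℝ) := by exact_mod_cast Nat.lt_of_lt_of_le Nat.zero_lt_one hk
  have hne : (k : ℝ) ≠ 0 := ne_of_gt hk0
  have hvol : volume (Set.Icc (-(1 / (2 * (k : ℝ)))) (1 / (2 * (k : ℝ)))) = ENNReal.ofReal (1 / (k : ℝ)) := by
    rw [Real.volume_Icc]
    congr 1
    field_simp
    norm_num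
  have hinv : (volume (Set.Icc (-(1 / (2 * (k : ℝ)))) (1 / (2 * (k : ℝ)))))⁻¹ = ENNReal.ofReal (k : ℝ) := by
    rw [hvol, ← ENNReal.ofReal_inv_of_pos (by positivity)]
    norm_num
  rw [hinv]
  haveI hfin : IsFiniteMeasure ((ENNReal.ofReal (k : ℝ)) •
      volume.restrict (Set.Icc (-(1 / (2 * (k : ℝ)))) (1 / (2 * (k : ℝ))))) := by
    constructor
    rw [Measure.smul_apply, smul_eq_mul, Measure.restrict_apply_univ]
    exact ENNReal.mul_lt_top ENNReal.ofReal_lt_top measure_Icc_lt_top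
  refine Measure.pi_eq fun t ht => ?_
  rw [Measure.smul_apply, smul_eq_mul, Measure.restrict_apply (MeasurableSet.univ_pi ht)]
  have hIcc : Set.Icc (fun _ : Fin s => -(1 / (2 * (k : ℝ)))) (fun _ : Fin s => 1 / (2 * (k : ℝ)))
      = Set.pi Set.univ fun _ : Fin s => Set.Icc (-(1 / (2 * (k : ℝ)))) (1 / (2 * (k : ℝ))) := by
    rw [Set.pi_univ_Icc]
  rw [hIcc, ← Set.pi_inter_distrib, volume_pi_pi]
  simp only [Measure.smul_apply, smul_eq_mul, Measure.restrict_apply (ht _)]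
  rw [Finset.prod_mul_distrib, Finset.prod_const, Finset.card_univ, Fintype.card_fin]

/-- Unbiasedness over the extended grid (Lemma `expectation`): let `g ∈ L₁([0,1]^s)` be
extended by zero to `ḡ : ℝ^s → ℝ`, let `λ` be an odd integer, `k ≥ 2`,
`m ≥ (|λ|-1)/2` (equivalently `|λ| ≤ 2m+1`), and let `𝔠_{m,k}` be the grid of centres
`((2j_1+1)/(2k),…,(2j_s+1)/(2k))`, `j ∈ {-m,…,k+m-1}^s`, with independent uniforms `U_c`
on `[-1/(2k),1/(2k)]^s`. Then `E[k^{-s} ∑_{c} ḡ(c + λ U_c)] = ∫_{[0,1]^s} g(u) du`. -/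
theorem stmt_10 (s : ℕ) (hs : 1 ≤ s) (k m : ℕ) (hk : 2 ≤ k)
    (lam : ℤ) (hlam : Odd lam) (hm : lam.natAbs ≤ 2 * m + 1)
    {Ω : Type} [MeasurableSpace Ω] (μ : Measure Ω) [IsProbabilityMeasure μ]
    (U : (Fin s → ℤ) → Ω → (Fin s → ℝ))
    (hmeas : ∀ j, Measurable (U j))
    (hlaw : ∀ j, Measure.map (U j) μ = Measure.pi fun _ : Fin s =>
      (volume (Set.Icc (-(1 / (2 * (k : ℝ)))) (1 / (2 * (k : ℝ)))))⁻¹ •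
        volume.restrict (Set.Icc (-(1 / (2 * (k : ℝ)))) (1 / (2 * (k : ℝ)))))
    (hindep : iIndepFun U μ)
    (g gbar : (Fin s → ℝ) → ℝ) (hgm : Measurable g)
    (hg : IntegrableOn g (Set.Icc 0 1) volume)
    (hgbar : ∀ u ∈ Set.Icc (0 : Fin s → ℝ) 1, gbar u = g u)
    (hgbar0 : ∀ u ∉ Set.Icc (0 : Fin s → ℝ) 1, gbar u = 0) :
    ∫ ω, ((k : ℝ) ^ s)⁻¹ *
        ∑ j ∈ Fintype.piFinset (fun _ : Fin s => Finset.Icc (-(m : ℤ)) ((k : ℤ) + m - 1)),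
          gbar (fun i => (2 * ((j i : ℤ) : ℝ) + 1) / (2 * (k : ℝ)) + (lam : ℝ) * U j ω i) ∂μ
      = ∫ u in Set.Icc (0 : Fin s → ℝ) 1, g u := by
  classical
  have hk1 : 1 ≤ k := le_trans (by norm_num) hk
  have hk0 : (0 : ℝ) < (k : ℝ) := by exact_mod_cast Nat.lt_of_lt_of_le Nat.zero_lt_one hk1
  have hlamZ : lam ≠ 0 := by rintro rfl; rcases hlam with ⟨t, ht⟩; omega
  have hlamne : (lam : ℝ) ≠ 0 := Int.cast_ne_zero.mpr hlamZ
  set L : ℕ := lam.natAbs with hLdef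
  have hL1 : 1 ≤ L := Int.natAbs_pos.mpr hlamZ
  have habs : |(lam : ℝ)| = (L : ℝ) := by
    rw [hLdef, Nat.cast_natAbs]
    push_cast
    rfl
  have hLpos : (0 : ℝ) < (L : ℝ) := by exact_mod_cast hL1
  set c : (Fin s → ℤ) → (Fin s → ℝ) := fun j i => (2 * ((j i : ℤ) : ℝ) + 1) / (2 * (k : ℝ)) with hc
  set box := Fintype.piFinset (fun _ : Fin s => Finset.Icc (-(m : ℤ)) ((k : ℤ) + m - 1)) with hbox
  set S : Set (Fin s → ℝ) :=
    Set.Icc (fun _ : Fin s => -(1 / (2 * (k : ℝ)))) (fun _ => 1 / (2 * (k : ℝ))) with hSdef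
  have hSmeas : MeasurableSet S := measurableSet_Icc
  set rL : Fin s → ℝ := fun _ => (L : ℝ) / (2 * (k : ℝ)) with hrL
  have hIccMeas : MeasurableSet (Set.Icc (0 : Fin s → ℝ) 1) := measurableSet_Icc
  have gbar_eq : gbar = (Set.Icc (0 : Fin s → ℝ) 1).indicator g := by
    funext u
    by_cases hu : u ∈ Set.Icc (0 : Fin s → ℝ) 1
    · rw [hgbar u hu, Set.indicator_of_mem hu]
    · rw [hgbar0 u hu, Set.indicator_of_notMem hu]
  have hgbarm : Measurable gbar := by rw [gbar_eq]; exact hgm.indicator hIccMeas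
  have hgbar_int : Integrable gbar volume := by
    rw [gbar_eq]; exact (integrable_indicator_iff hIccMeas).2 hg
  have hT : ∀ j : Fin s → ℤ, Measurable fun x : Fin s → ℝ => c j + (lam : ℝ) • x :=
    fun j => (measurable_id.const_smul ((lam : ℝ))).const_add (c j)
  have haff_int : ∀ j : Fin s → ℤ,
      Integrable (fun x : Fin s → ℝ => gbar (c j + (lam : ℝ) • x)) volume := by
    intro j
    exact (integrable_comp_smul_iff volume (fun y => gbar (c j + y)) hlamne).2
      (hgbar_int.comp_add_left (c j))
  have hCne : (ENNReal.ofReal (k : ℝ)) ^ s ≠ 0 := by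
    apply pow_ne_zero
    simp only [ne_eq, ENNReal.ofReal_eq_zero, not_le]
    exact hk0
  have hCtop : (ENNReal.ofReal (k : ℝ)) ^ s ≠ ⊤ := ENNReal.pow_ne_top ENNReal.ofReal_ne_top
  have hCtoReal : ((ENNReal.ofReal (k : ℝ)) ^ s).toReal = (k : ℝ) ^ s := by
    rw [ENNReal.toReal_pow, ENNReal.toReal_ofReal (le_of_lt hk0)]
  have hInt : ∀ j : Fin s → ℤ, Integrable (fun ω => gbar (c j + (lam : ℝ) • U j ω)) μ := by
    intro j
    have h1 : Integrable (fun x : Fin s → ℝ => gbar (c j + (lam : ℝ) • x)) (Measure.map (U j) μ) := by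
      rw [hlaw j, pi_unif_eq s k hk1]
      exact (integrable_smul_measure hCne hCtop).2 ((haff_int j).integrableOn)
    have := (integrable_map_measure ((hgbarm.comp (hT j)).aestronglyMeasurable)
      (hmeas j).aemeasurable).1 h1
    exact this
  -- per-j computation
  have key : ∀ j : Fin s → ℤ, (∫ ω, gbar (c j + (lam : ℝ) • U j ω) ∂μ)
      = (k : ℝ) ^ s * (((L : ℝ) ^ s)⁻¹ *
          ∫ z, (Set.Icc (c j - rL) (c j + rL)).indicator gbar z ∂volume) := by
    intro j
    have e1 : (∫ ω, gbar (c j + (lam : ℝ) • U j ω) ∂μ)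
        = ∫ x, gbar (c j + (lam : ℝ) • x) ∂(Measure.map (U j) μ) :=
      (integral_map (hmeas j).aemeasurable ((hgbarm.comp (hT j)).aestronglyMeasurable)).symm
    have e2 : (∫ x, gbar (c j + (lam : ℝ) • x) ∂(Measure.map (U j) μ))
        = (k : ℝ) ^ s * ∫ x in S, gbar (c j + (lam : ℝ) • x) ∂volume := by
      rw [hlaw j, pi_unif_eq s k hk1, integral_smul_measure, hCtoReal, smul_eq_mul]
    have e3 : (∫ x in S, gbar (c j + (lam : ℝ) • x) ∂volume)
        = ∫ x, S.indicator (fun x => gbar (c j + (lam : ℝ) • x)) x ∂volume :=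
      (integral_indicator hSmeas).symm
    have hBind : ∀ x : Fin s → ℝ, S.indicator (fun x => gbar (c j + (lam : ℝ) • x)) x
        = (Set.Icc (-rL) rL).indicator (fun y => gbar (c j + y)) ((lam : ℝ) • x) := by
      intro x
      have hmem : x ∈ S ↔ (lam : ℝ) • x ∈ Set.Icc (-rL) rL := by
        simp only [hSdef, hrL, Set.mem_Icc, Pi.le_def, Pi.neg_apply, Pi.smul_apply, smul_eq_mul]
        rw [← forall_and, ← forall_and]
        apply forall_congr'
        intro i
        rw [← abs_le, ← abs_le, abs_mul, habs]
        constructor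
        · intro h
          calc (L : ℝ) * |x i| ≤ (L : ℝ) * (1 / (2 * (k : ℝ))) :=
                mul_le_mul_of_nonneg_left h (le_of_lt hLpos)
            _ = (L : ℝ) / (2 * (k : ℝ)) := by ring
        · intro h
          have h2 : (L : ℝ) * |x i| ≤ (L : ℝ) * (1 / (2 * (k : ℝ))) := by
            calc (L : ℝ) * |x i| ≤ (L : ℝ) / (2 * (k : ℝ)) := h
              _ = (L : ℝ) * (1 / (2 * (k : ℝ))) := by ring
          exact le_of_mul_le_mul_left h2 hLpos
      simp only [Set.indicator_apply]
      exact if_congr hmem rfl rfl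
    have e4 : (∫ x, (Set.Icc (-rL) rL).indicator (fun y => gbar (c j + y)) ((lam : ℝ) • x) ∂volume)
        = |((lam : ℝ) ^ s)⁻¹| • ∫ y, (Set.Icc (-rL) rL).indicator (fun y => gbar (c j + y)) y ∂volume := by
      have := Measure.integral_comp_smul (volume : Measure (Fin s → ℝ))
        ((Set.Icc (-rL) rL).indicator (fun y => gbar (c j + y))) ((lam : ℝ))
      rwa [Module.finrank_fintype_fun_eq_card, Fintype.card_fin] at this
    have e5 : ∀ y : Fin s → ℝ, (Set.Icc (-rL) rL).indicator (fun y => gbar (c j + y)) y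
        = (Set.Icc (c j - rL) (c j + rL)).indicator gbar (c j + y) := by
      intro y
      have hmem : y ∈ Set.Icc (-rL) rL ↔ c j + y ∈ Set.Icc (c j - rL) (c j + rL) := by
        simp only [Set.mem_Icc, Pi.le_def, Pi.neg_apply, Pi.sub_apply, Pi.add_apply]
        rw [← forall_and, ← forall_and]
        apply forall_congr'
        intro i
        constructor
        · rintro ⟨h1, h2⟩; exact ⟨by linarith, by linarith⟩
        · rintro ⟨h1, h2⟩; exact ⟨by linarith, by linarith⟩
      simp only [Set.indicator_apply]
      exact if_congr hmem rfl rfl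
    have e6 : (∫ y, (Set.Icc (c j - rL) (c j + rL)).indicator gbar (c j + y) ∂volume)
        = ∫ z, (Set.Icc (c j - rL) (c j + rL)).indicator gbar z ∂volume :=
      integral_add_left_eq_self ((Set.Icc (c j - rL) (c j + rL)).indicator gbar) (c j)
    have habs2 : |((lam : ℝ) ^ s)⁻¹| = ((L : ℝ) ^ s)⁻¹ := by
      rw [abs_inv, abs_pow, habs]
    rw [e1, e2, e3]
    simp only [hBind]
    rw [e4]
    simp only [e5]
    rw [e6, habs2, smul_eq_mul]
  -- null set of bad points
  set N : Set (Fin s → ℝ) := ⋃ i : Fin s, ⋃ n : ℤ, {z : Fin s → ℝ | z i = (n : ℝ) / (2 * (k : ℝ))}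
    with hNdef
  have hN : volume N = 0 := by
    rw [hNdef]
    apply measure_iUnion_null
    intro i
    apply measure_iUnion_null
    intro n
    rw [volume_pi]
    exact Measure.pi_hyperplane _ i _
  have hae : (fun z => ∑ j ∈ box, (Set.Icc (c j - rL) (c j + rL)).indicator gbar z)
      =ᵐ[volume] fun z => (L : ℝ) ^ s * (Set.Icc (0 : Fin s → ℝ) 1).indicator g z := by
    have hzN : ∀ᵐ z : Fin s → ℝ ∂volume, z ∉ N := measure_eq_zero_iff_ae_notMem.mp hN
    filter_upwards [hzN] with z hz
    have hz' : ∀ (i : Fin s) (n : ℤ), z i ≠ (n : ℝ) / (2 * (k : ℝ)) := by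
      intro i n h
      exact hz (by rw [hNdef]; exact Set.mem_iUnion.mpr ⟨i, Set.mem_iUnion.mpr ⟨n, h⟩⟩)
    by_cases hzI : z ∈ Set.Icc (0 : Fin s → ℝ) 1
    · have hzImem : z ∈ Set.Icc (0 : Fin s → ℝ) 1 := hzI
      obtain ⟨h0, h1⟩ := hzI
      have hcoord : ∀ i, 0 < z i ∧ z i < 1 := by
        intro i
        constructor
        · refine lt_of_le_of_ne (h0 i) fun h => hz' i 0 ?_
          rw [← h]; norm_num
        · refine lt_of_le_of_ne (h1 i) fun h => hz' i (2 * k) ?_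
          rw [h]; push_cast; field_simp
      have hirr : ∀ (i : Fin s) (n : ℤ), 2 * (k : ℝ) * z i ≠ (n : ℝ) := by
        intro i n h
        apply hz' i n
        field_simp
        linarith [h]
      have hLHS : (∑ j ∈ box, (Set.Icc (c j - rL) (c j + rL)).indicator gbar z)
          = (∑ j ∈ box, ∏ i : Fin s,
              (if (-(((L : ℝ)) / (2 * (k : ℝ))) ≤ z i - (2 * ((j i : ℤ) : ℝ) + 1) / (2 * (k : ℝ)) ∧
                  z i - (2 * ((j i : ℤ) : ℝ) + 1) / (2 * (k : ℝ)) ≤ (L : ℝ) / (2 * (k : ℝ)))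
                then (1 : ℝ) else 0)) * gbar z := by
        rw [Finset.sum_mul]
        apply Finset.sum_congr rfl
        intro j _
        have hmem : z ∈ Set.Icc (c j - rL) (c j + rL) ↔ ∀ i : Fin s,
            (-(((L : ℝ)) / (2 * (k : ℝ))) ≤ z i - (2 * ((j i : ℤ) : ℝ) + 1) / (2 * (k : ℝ)) ∧
             z i - (2 * ((j i : ℤ) : ℝ) + 1) / (2 * (k : ℝ)) ≤ (L : ℝ) / (2 * (k : ℝ))) := by
          simp only [Set.mem_Icc, Pi.le_def, Pi.sub_apply, Pi.add_apply, hrL, hc]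
          rw [← forall_and]
          apply forall_congr'
          intro i
          constructor
          · rintro ⟨a, b⟩; exact ⟨by linarith, by linarith⟩
          · rintro ⟨a, b⟩; exact ⟨by linarith, by linarith⟩
        rw [Set.indicator_apply, if_congr hmem rfl rfl, Fintype.prod_boole]
        split_ifs <;> simp
      have hcount : (∑ j ∈ box, ∏ i : Fin s,
              (if (-(((L : ℝ)) / (2 * (k : ℝ))) ≤ z i - (2 * ((j i : ℤ) : ℝ) + 1) / (2 * (k : ℝ)) ∧
                  z i - (2 * ((j i : ℤ) : ℝ) + 1) / (2 * (k : ℝ)) ≤ (L : ℝ) / (2 * (k : ℝ)))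
                then (1 : ℝ) else 0)) = (L : ℝ) ^ s := by
        have e := Finset.sum_prod_piFinset (Finset.Icc (-(m : ℤ)) ((k : ℤ) + m - 1))
          (fun (i : Fin s) (t : ℤ) =>
            (if (-(((L : ℝ)) / (2 * (k : ℝ))) ≤ z i - (2 * (t : ℝ) + 1) / (2 * (k : ℝ)) ∧
                z i - (2 * (t : ℝ) + 1) / (2 * (k : ℝ)) ≤ (L : ℝ) / (2 * (k : ℝ)))
              then (1 : ℝ) else 0))
        rw [hbox]
        rw [show (∑ j ∈ Fintype.piFinset fun _ : Fin s => Finset.Icc (-(m : ℤ)) ((k : ℤ) + m - 1),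
            ∏ i : Fin s,
              (if (-(((L : ℝ)) / (2 * (k : ℝ))) ≤ z i - (2 * ((j i : ℤ) : ℝ) + 1) / (2 * (k : ℝ)) ∧
                  z i - (2 * ((j i : ℤ) : ℝ) + 1) / (2 * (k : ℝ)) ≤ (L : ℝ) / (2 * (k : ℝ)))
                then (1 : ℝ) else 0))
            = ∏ i : Fin s, ∑ t ∈ Finset.Icc (-(m : ℤ)) ((k : ℤ) + m - 1),
              (if (-(((L : ℝ)) / (2 * (k : ℝ))) ≤ z i - (2 * (t : ℝ) + 1) / (2 * (k : ℝ)) ∧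
                  z i - (2 * (t : ℝ) + 1) / (2 * (k : ℝ)) ≤ (L : ℝ) / (2 * (k : ℝ)))
                then (1 : ℝ) else 0) from e]
        rw [Finset.prod_congr rfl fun i _ =>
          count_1d k m L hk1 hm (z i) (hcoord i).1 (hcoord i).2 (hirr i)]
        rw [Finset.prod_const, Finset.card_univ, Fintype.card_fin]
      rw [hLHS, hcount, hgbar z hzImem, Set.indicator_of_mem hzImem]
    · have hg0 : gbar z = 0 := hgbar0 z hzI
      rw [Set.indicator_of_notMem hzI, mul_zero]
      apply Finset.sum_eq_zero
      intro j _
      rw [Set.indicator_apply]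
      split_ifs <;> simp [hg0]
  -- assembling
  have hfun : (∫ ω, ((k : ℝ) ^ s)⁻¹ *
        ∑ j ∈ Fintype.piFinset (fun _ : Fin s => Finset.Icc (-(m : ℤ)) ((k : ℤ) + m - 1)),
          gbar (fun i => (2 * ((j i : ℤ) : ℝ) + 1) / (2 * (k : ℝ)) + (lam : ℝ) * U j ω i) ∂μ)
      = ∫ ω, ((k : ℝ) ^ s)⁻¹ * ∑ j ∈ box, gbar (c j + (lam : ℝ) • U j ω) ∂μ := rfl
  rw [hfun]
  have hks : ((k : ℝ) ^ s) ≠ 0 := by positivity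
  have hLs : ((L : ℝ) ^ s) ≠ 0 := by positivity
  calc (∫ ω, ((k : ℝ) ^ s)⁻¹ * ∑ j ∈ box, gbar (c j + (lam : ℝ) • U j ω) ∂μ)
      = ((k : ℝ) ^ s)⁻¹ * ∫ ω, ∑ j ∈ box, gbar (c j + (lam : ℝ) • U j ω) ∂μ :=
        integral_const_mul _ _
    _ = ((k : ℝ) ^ s)⁻¹ * ∑ j ∈ box, ∫ ω, gbar (c j + (lam : ℝ) • U j ω) ∂μ := by
        rw [integral_finset_sum box fun j _ => hInt j]
    _ = ((k : ℝ) ^ s)⁻¹ * ∑ j ∈ box, (k : ℝ) ^ s * (((L : ℝ) ^ s)⁻¹ *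
          ∫ z, (Set.Icc (c j - rL) (c j + rL)).indicator gbar z ∂volume) := by
        rw [Finset.sum_congr rfl fun j _ => key j]
    _ = ((L : ℝ) ^ s)⁻¹ * ∑ j ∈ box, ∫ z, (Set.Icc (c j - rL) (c j + rL)).indicator gbar z ∂volume := by
        rw [← Finset.mul_sum, ← Finset.mul_sum, ← mul_assoc, ← mul_assoc,
          inv_mul_cancel₀ hks, one_mul]
    _ = ((L : ℝ) ^ s)⁻¹ * ∫ z, ∑ j ∈ box, (Set.Icc (c j - rL) (c j + rL)).indicator gbar z ∂volume := by
        rw [integral_finset_sum box fun j _ => hgbar_int.indicator measurableSet_Icc]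
    _ = ((L : ℝ) ^ s)⁻¹ * ∫ z, (L : ℝ) ^ s * (Set.Icc (0 : Fin s → ℝ) 1).indicator g z ∂volume := by
        rw [integral_congr_ae hae]
    _ = ((L : ℝ) ^ s)⁻¹ * ((L : ℝ) ^ s * ∫ z, (Set.Icc (0 : Fin s → ℝ) 1).indicator g z ∂volume) := by
        rw [integral_const_mul]
    _ = ∫ u in Set.Icc (0 : Fin s → ℝ) 1, g u := by
        rw [integral_indicator hIccMeas, ← mul_assoc, inv_mul_cancel₀ hLs, one_mul]
end

section
/- Let $f\in\mathcal{C}^r([0,1]^s)$, $r\geq 1$, $k\geq r$, and suppose $\widehat D^\alpha_k f(c)$ are numerical derivatives satisfying $|\widehat D^\alpha_k f(c)-D^\alpha f(c)|\leq C_{|\alpha|,s}\|f\|_r k^{-(r-|\alpha|)}$ for all multi-indices $|\alpha|<r$ and all $c\in\mathfrak{C}_k$. Define $h_{k,c}(u)=\bar h_{k,c}(u)-\mathbb{E}[\bar h_{k,c}(U_c)]$, where $\bar h_{k,c}(u)=f(c+u)-\sum_{1\leq|\alpha|\leq r-1}\frac{\widehat D^\alpha_k f(c)}{\alpha!}\left(u^\alpha-\prod_{j=1}^s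 d_k(\alpha_j)\right)$ and $d_k(i)=\mathbb{E}[V^i]$ for $V\sim\mathcal{U}([-1/(2k),1/(2k)])$. Then there exists $\widehat C_{s,r}<\infty$, independent of $k$ and $f$, such that $\max_{c\in\mathfrak{C}_k}\sup_{u\in[-1/(2k),1/(2k)]^s}|h_{k,c}(u)|\leq\widehat C_{s,r}\|f\|_r k^{-r}$. -/
open MeasureTheory Finset

/-- `d_k(i) = E[V^i]` for `V ~ U([-1/(2k), 1/(2k)])`. -/
noncomputable def dk (k i : ℕ) : ℝ :=
  if Even i then 1 / ((i + 1 : ℝ) * (2 * (k : ℝ)) ^ i) else 0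

/-- The uniform distribution on the cube `[-1/(2k), 1/(2k)]^s`. -/
noncomputable def cubeMeasure (s k : ℕ) : Measure (Fin s → ℝ) :=
  Measure.pi fun _ : Fin s =>
    (volume (Set.Icc (-(1 / (2 * (k : ℝ)))) (1 / (2 * (k : ℝ)))))⁻¹ •
      volume.restrict (Set.Icc (-(1 / (2 * (k : ℝ)))) (1 / (2 * (k : ℝ))))

/-- `h̄_{k,c}(u) = f(c+u) - ∑_{1 ≤ |α| ≤ r-1} (D̂^α_k f(c)/α!)(u^α - ∏_j d_k(α_j))`. -/
noncomputable def hbar (s r k : ℕ) (f : (Fin s → ℝ) → ℝ)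
    (Dhat : (Fin s → ℕ) → (Fin s → ℝ) → ℝ) (c u : Fin s → ℝ) : ℝ :=
  f (c + u) -
    ∑ l ∈ Finset.Icc 1 (r - 1), ∑ α ∈ Finset.Nat.antidiagonalTuple s l,
      Dhat α c / ((∏ i, (α i).factorial : ℕ) : ℝ) *
        ((∏ i, u i ^ α i) - ∏ i, dk k (α i))



/-- fiber counts of a tuple -/
def cnt {l s : ℕ} (m : Fin l → Fin s) (i : Fin s) : ℕ :=
  (Finset.univ.filter fun p => m p = i).card

lemma cnt_sum {l s : ℕ} (m : Fin l → Fin s) : ∑ i, cnt m i = l := by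
  have := Finset.card_eq_sum_card_fiberwise
    (s := (univ : Finset (Fin l))) (t := univ) (f := m) (fun x _ => mem_univ _)
  simpa [cnt, Finset.card_univ] using this.symm

lemma prod_cnt {l s : ℕ} (m : Fin l → Fin s) (u : Fin s → ℝ) :
    ∏ p, u (m p) = ∏ i, u i ^ cnt m i := by
  rw [← Finset.prod_fiberwise_of_maps_to (t := univ)
    (fun x (_ : x ∈ (univ : Finset (Fin l))) => mem_univ (m x)) (fun p => u (m p))]
  refine Finset.prod_congr rfl fun i _ => ?_
  rw [Finset.prod_congr rfl (fun p hp => ?_), Finset.prod_const, cnt]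
  exact congrArg u (Finset.mem_filter.mp hp).2

lemma cnt_cons {l s : ℕ} (x : Fin s) (t : Fin l → Fin s) (i : Fin s) :
    cnt (Fin.cons x t) i = (if x = i then 1 else 0) + cnt t i := by
  simp only [cnt, Finset.card_filter]
  rw [Fin.sum_univ_succ]
  simp [Fin.cons_zero, Fin.cons_succ]

lemma card_cnt (s : ℕ) : ∀ (l : ℕ) (α : Fin s → ℕ), (∑ i, α i = l) →
    (Fintype.card {m : Fin l → Fin s // cnt m = α}) * ∏ i, (α i).factorial =
      l.factorial := by
  intro l
  induction l with
  | zero =>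
    intro α hα
    have hα0 : α = fun _ => 0 := by
      funext i
      exact (Finset.sum_eq_zero_iff.mp hα) i (mem_univ i)
    subst hα0
    have h1 : Fintype.card {m : Fin 0 → Fin s // cnt m = fun _ => 0} = 1 := by
      have : ∀ m : Fin 0 → Fin s, cnt m = fun _ => 0 := by
        intro m; funext i; simp [cnt]
      simp [Fintype.card_subtype, Finset.filter_true_of_mem (fun m _ => this m)]
    simp [h1]
  | succ l ih =>
    intro α hα
    -- split along the value at 0
    have e1 : {m : Fin (l+1) → Fin s // cnt m = α} ≃
        Σ x : Fin s, {t : Fin l → Fin s // cnt (Fin.cons x t) = α} :=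
      { toFun := fun m => ⟨m.1 0, Fin.tail m.1, by
          rw [Fin.cons_self_tail]; exact m.2⟩
        invFun := fun p => ⟨Fin.cons p.1 p.2.1, p.2.2⟩
        left_inv := fun m => by
          ext : 1
          exact Fin.cons_self_tail m.1
        right_inv := fun p => by
          refine Sigma.ext rfl ?_
          simp [Fin.cons_zero, Fin.tail_cons]
          exact HEq.rfl }
    rw [Fintype.card_congr e1, Fintype.card_sigma, Finset.sum_mul]
    have key : ∀ x : Fin s,
        Fintype.card {t : Fin l → Fin s // cnt (Fin.cons x t) = α} *
          ∏ i, (α i).factorial = α x * l.factorial := by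
      intro x
      rcases Nat.eq_zero_or_pos (α x) with hx | hx
      · have : IsEmpty {t : Fin l → Fin s // cnt (Fin.cons x t) = α} := by
          constructor
          rintro ⟨t, ht⟩
          have := congrFun ht x
          rw [cnt_cons, if_pos rfl] at this
          omega
        rw [Fintype.card_eq_zero, hx]
        ring
      · set α' := Function.update α x (α x - 1) with hα'
        have hmem : ∀ t : Fin l → Fin s, cnt (Fin.cons x t) = α ↔ cnt t = α' := by
          intro t
          constructor
          · intro h
            funext i
            have hi := congrFun h i
            rw [cnt_cons] at hi
            by_cases hxi : x = i
            · subst hxi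
              simp only [if_pos] at hi
              rw [hα', Function.update_self]
              omega
            · simp only [if_neg hxi] at hi
              rw [hα', Function.update_of_ne (Ne.symm hxi)]
              omega
          · intro h
            funext i
            rw [cnt_cons, congrFun h i]
            by_cases hxi : x = i
            · subst hxi
              rw [if_pos rfl, hα', Function.update_self]
              omega
            · rw [if_neg hxi, hα', Function.update_of_ne (Ne.symm hxi), zero_add]
        have ecard : Fintype.card {t : Fin l → Fin s // cnt (Fin.cons x t) = α}
            = Fintype.card {t : Fin l → Fin s // cnt t = α'} := by
          apply Fintype.card_congr
          exact Equiv.subtypeEquivRight hmem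
        have hxsum : ∑ i, α i = (∑ i ∈ univ \ {x}, α i) + α x :=
          Finset.sum_eq_sum_sdiff_singleton_add (mem_univ x) α
        have hsum' : ∑ i, α' i = l := by
          rw [hα', Finset.sum_update_of_mem (mem_univ x)]
          omega
        have hprod : ∏ i, (α i).factorial = α x * ∏ i, (α' i).factorial := by
          rw [← Finset.mul_prod_erase univ _ (mem_univ x),
              ← Finset.mul_prod_erase univ (fun i => (α' i).factorial) (mem_univ x)]
          have h1 : (α x).factorial = α x * (α' x).factorial := by
            rw [hα', Function.update_self]
            exact (Nat.mul_factorial_pred hx.ne').symm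
          rw [h1]
          have h2 : ∀ i ∈ univ.erase x, (α' i).factorial = (α i).factorial := by
            intro i hi
            rw [hα', Function.update_of_ne (Finset.ne_of_mem_erase hi)]
          rw [Finset.prod_congr rfl h2]
          ring
        rw [ecard, hprod, ← mul_assoc, mul_comm _ (α x), mul_assoc, ih α' hsum']
    rw [Finset.sum_congr rfl (fun x _ => key x), ← Finset.sum_mul, hα,
      Nat.factorial_succ]


lemma cnt_def {l s : ℕ} (m : Fin l → Fin s) (i : Fin s) :
    cnt m i = (Finset.univ.filter fun p => m p = i).card := rfl

lemma sum_cnt_eq {s l : ℕ} (G : (Fin s → ℕ) → ℝ) :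
    ∑ m : Fin l → Fin s, G (cnt m) =
      ∑ α ∈ Finset.Nat.antidiagonalTuple s l,
        ((l.factorial : ℝ) / ∏ i, ((α i).factorial : ℝ)) * G α := by
  classical
  rw [← Finset.sum_fiberwise_of_maps_to (g := fun m : Fin l → Fin s => cnt m)
      (t := Finset.Nat.antidiagonalTuple s l)
      (fun m _ => Finset.Nat.mem_antidiagonalTuple.mpr (cnt_sum m)) (fun m => G (cnt m))]
  refine Finset.sum_congr rfl fun α hα => ?_
  have hsum : ∑ i, α i = l := Finset.Nat.mem_antidiagonalTuple.mp hα
  have hcard : (univ.filter fun m : Fin l → Fin s => cnt m = α).card *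
      ∏ i, (α i).factorial = l.factorial := by
    rw [← Fintype.card_subtype]
    exact card_cnt s l α hsum
  have hpos : (0:ℝ) < ∏ i, ((α i).factorial : ℝ) := by
    apply Finset.prod_pos
    intro i _
    exact_mod_cast Nat.factorial_pos (α i)
  have hcardR : ((univ.filter fun m : Fin l → Fin s => cnt m = α).card : ℝ) =
      (l.factorial : ℝ) / ∏ i, ((α i).factorial : ℝ) := by
    rw [eq_div_iff (ne_of_gt hpos)]
    exact_mod_cast hcard
  rw [Finset.sum_congr rfl (fun m hm => by
      rw [(Finset.mem_filter.mp hm).2]),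
    Finset.sum_const, nsmul_eq_mul, hcardR]

lemma uniqueDiffOn_S (s : ℕ) : UniqueDiffOn ℝ (Set.Icc (0 : Fin s → ℝ) 1) := by
  apply uniqueDiffOn_convex (convex_Icc _ _)
  rw [← Set.pi_univ_Icc, interior_pi_set Set.finite_univ]
  refine ⟨fun _ => 1/2, ?_⟩
  intro i _
  show (1:ℝ)/2 ∈ interior (Set.Icc (0:ℝ) 1)
  rw [interior_Icc]
  norm_num

lemma iterated_line (s r : ℕ) {f : (Fin s → ℝ) → ℝ}
    (hf : ContDiffOn ℝ (r:ℕ∞) f (Set.Icc 0 1)) (c u : Fin s → ℝ)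
    (hmap : ∀ t : ℝ, t ∈ Set.Icc (0:ℝ) 1 → c + t • u ∈ Set.Icc (0 : Fin s → ℝ) 1) :
    ∀ l : ℕ, l ≤ r → ∀ t ∈ Set.Icc (0:ℝ) 1,
      iteratedDerivWithin l (fun t => f (c + t • u)) (Set.Icc 0 1) t
        = iteratedFDerivWithin ℝ l f (Set.Icc 0 1) (c + t • u) (fun _ => u) := by
  intro l
  induction l with
  | zero =>
    intro _ t ht
    simp [iteratedFDerivWithin_zero_apply]
  | succ l ih =>
    intro hl t ht
    have hl' : l ≤ r := le_of_lt (Nat.lt_of_succ_le hl)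
    have hUD : UniqueDiffOn ℝ (Set.Icc (0:ℝ) 1) := uniqueDiffOn_Icc one_pos
    rw [iteratedDerivWithin_succ]
    have hcongr : derivWithin (iteratedDerivWithin l (fun t => f (c + t • u)) (Set.Icc 0 1))
        (Set.Icc (0:ℝ) 1) t =
        derivWithin (fun t => iteratedFDerivWithin ℝ l f (Set.Icc 0 1) (c + t • u) (fun _ => u))
        (Set.Icc (0:ℝ) 1) t :=
      derivWithin_congr (fun y hy => ih hl' y hy) (ih hl' t ht)
    rw [hcongr]
    have hdiff : DifferentiableOn ℝ (iteratedFDerivWithin ℝ l f (Set.Icc 0 1)) (Set.Icc 0 1) :=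
      hf.differentiableOn_iteratedFDerivWithin (by exact_mod_cast Nat.lt_of_succ_le hl)
        (uniqueDiffOn_S s)
    have hL : HasDerivWithinAt (fun t : ℝ => c + t • u) u (Set.Icc 0 1) t := by
      simpa using ((hasDerivWithinAt_id t (Set.Icc (0:ℝ) 1)).smul_const u).const_add c
    have hF : HasFDerivWithinAt (iteratedFDerivWithin ℝ l f (Set.Icc 0 1))
        (fderivWithin ℝ (iteratedFDerivWithin ℝ l f (Set.Icc 0 1)) (Set.Icc 0 1) (c + t • u))
        (Set.Icc 0 1) (c + t • u) :=
      (hdiff (c + t • u) (hmap t ht)).hasFDerivWithinAt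
    have hcomp := hF.comp_hasDerivWithinAt t hL (fun y hy => hmap y hy)
    have happ := (ContinuousMultilinearMap.apply ℝ (fun _ : Fin l => (Fin s → ℝ)) ℝ
      (fun _ => u)).hasFDerivAt.comp_hasDerivWithinAt t hcomp
    have happ' : HasDerivWithinAt
        (fun t => iteratedFDerivWithin ℝ l f (Set.Icc 0 1) (c + t • u) (fun _ => u))
        ((fderivWithin ℝ (iteratedFDerivWithin ℝ l f (Set.Icc 0 1)) (Set.Icc 0 1) (c + t • u)) u
          (fun _ => u)) (Set.Icc 0 1) t := happ
    rw [happ'.derivWithin (hUD.uniqueDiffWithinAt ht)]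
    rw [iteratedFDerivWithin_succ_apply_left]
    rfl

lemma expand_multilinear {s l : ℕ}
    (F : ContinuousMultilinearMap ℝ (fun _ : Fin l => (Fin s → ℝ)) ℝ) (u : Fin s → ℝ) :
    F (fun _ => u) = ∑ m : Fin l → Fin s, (∏ p, u (m p)) * F (fun p => Pi.single (m p) 1) := by
  have hu : u = ∑ i : Fin s, u i • (Pi.single i 1 : Fin s → ℝ) := by
    funext j
    rw [Finset.sum_apply]
    simp [Pi.single_apply]
  calc F (fun _ : Fin l => u)
      = F.toMultilinearMap (fun _ : Fin l => ∑ i : Fin s, u i • (Pi.single i 1 : Fin s → ℝ)) := by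
        rw [← hu]; rfl
    _ = ∑ m : Fin l → Fin s,
          F.toMultilinearMap (fun p => u (m p) • (Pi.single (m p) 1 : Fin s → ℝ)) :=
        F.toMultilinearMap.map_sum
          (g := fun (_ : Fin l) (i : Fin s) => u i • (Pi.single i 1 : Fin s → ℝ))
    _ = ∑ m : Fin l → Fin s, (∏ p, u (m p)) * F (fun p => Pi.single (m p) 1) := by
        refine Finset.sum_congr rfl fun m _ => ?_
        have := F.toMultilinearMap.map_smul_univ (fun p => u (m p))
          (fun p => (Pi.single (m p) 1 : Fin s → ℝ))
        simpa [smul_eq_mul] using this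

lemma taylor_segment (s r : ℕ) (hr : 1 ≤ r) {f : (Fin s → ℝ) → ℝ}
    (hf : ContDiffOn ℝ (r:ℕ∞) f (Set.Icc 0 1))
    {M a : ℝ} (ha : 0 ≤ a) (hM : 0 ≤ M)
    (hMb : ∀ x ∈ Set.Icc (0 : Fin s → ℝ) 1, ∀ m : Fin r → Fin s,
      |iteratedFDerivWithin ℝ r f (Set.Icc 0 1) x (fun p => Pi.single (m p) 1)| ≤ M)
    (c u : Fin s → ℝ) (hu : ∀ i, |u i| ≤ a)
    (hmap : ∀ t : ℝ, t ∈ Set.Icc (0:ℝ) 1 → c + t • u ∈ Set.Icc (0 : Fin s → ℝ) 1) :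
    |f (c + u) - ∑ l ∈ Finset.range r, ((l.factorial : ℝ))⁻¹ *
        ∑ m : Fin l → Fin s, (∏ p, u (m p)) *
          iteratedFDerivWithin ℝ l f (Set.Icc 0 1) c (fun p => Pi.single (m p) 1)|
      ≤ (s:ℝ)^r * a^r * M := by
  set S := Set.Icc (0 : Fin s → ℝ) 1 with hS
  set g : ℝ → ℝ := fun t => f (c + t • u) with hg
  -- the line map is smooth
  have hline : ContDiff ℝ (r:ℕ∞) (fun t : ℝ => c + t • u) :=
    ContDiff.add contDiff_const (contDiff_id.smul contDiff_const)
  have hgc : ContDiffOn ℝ (r:ℕ∞) g (Set.Icc 0 1) :=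
    hf.comp (hline.contDiffOn) (fun t ht => hmap t ht)
  have hcd : ContDiffOn ℝ ((r - 1 + 1 : ℕ)) g (Set.Icc 0 1) := by
    rw [Nat.sub_add_cancel hr]
    exact hgc
  -- bound on the r-th derivative of g
  have hC : ∀ y ∈ Set.Icc (0:ℝ) 1,
      ‖iteratedDerivWithin ((r-1) + 1) g (Set.Icc 0 1) y‖ ≤ (s:ℝ)^r * a^r * M := by
    intro y hy
    rw [Nat.sub_add_cancel hr]
    rw [iterated_line s r hf c u hmap r le_rfl y hy]
    rw [expand_multilinear]
    rw [Real.norm_eq_abs]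
    refine (Finset.abs_sum_le_sum_abs _ _).trans ?_
    have hterm : ∀ m : Fin r → Fin s,
        |(∏ p, u (m p)) * iteratedFDerivWithin ℝ r f S (c + y • u)
            (fun p => Pi.single (m p) 1)| ≤ a^r * M := by
      intro m
      rw [abs_mul]
      have h1 : |∏ p, u (m p)| ≤ a ^ r := by
        rw [abs_prod]
        calc ∏ p, |u (m p)| ≤ ∏ _p : Fin r, a :=
              Finset.prod_le_prod (fun p _ => abs_nonneg _) (fun p _ => hu (m p))
          _ = a ^ r := by rw [Finset.prod_const, Finset.card_univ, Fintype.card_fin]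
      exact mul_le_mul h1 (hMb _ (hmap y hy) m) (abs_nonneg _) (pow_nonneg ha r)
    calc ∑ m : Fin r → Fin s, |(∏ p, u (m p)) * iteratedFDerivWithin ℝ r f S (c + y • u)
            (fun p => Pi.single (m p) 1)|
        ≤ ∑ _m : Fin r → Fin s, a^r * M :=
          Finset.sum_le_sum (fun m _ => hterm m)
      _ = (s:ℝ)^r * a^r * M := by
          rw [Finset.sum_const, Finset.card_univ, Fintype.card_fun]
          simp [nsmul_eq_mul, Fintype.card_fin]
          ring
  have htay := taylor_mean_remainder_bound (n := r - 1) zero_le_one hcd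
    (x := 1) (Set.right_mem_Icc.mpr zero_le_one) hC
  -- simplify the Taylor polynomial
  have hpoly : taylorWithinEval g (r-1) (Set.Icc 0 1) 0 1 =
      ∑ l ∈ Finset.range r, ((l.factorial : ℝ))⁻¹ *
        ∑ m : Fin l → Fin s, (∏ p, u (m p)) *
          iteratedFDerivWithin ℝ l f S c (fun p => Pi.single (m p) 1) := by
    rw [taylor_within_apply]
    rw [Nat.sub_add_cancel hr]
    refine Finset.sum_congr rfl fun l hl => ?_
    have hl' : l ≤ r := le_of_lt (Finset.mem_range.mp hl)
    have h0 : (0:ℝ) ∈ Set.Icc (0:ℝ) 1 := Set.left_mem_Icc.mpr zero_le_one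
    rw [iterated_line s r hf c u hmap l hl' 0 h0]
    have hc0 : c + (0:ℝ) • u = c := by simp
    rw [hc0, expand_multilinear]
    simp [smul_eq_mul]
    exact Or.inl rfl
  have hg1 : g 1 = f (c + u) := by simp [hg]
  rw [hpoly, hg1] at htay
  rw [Real.norm_eq_abs] at htay
  refine htay.trans ?_
  have h1 : (1:ℝ) - 0 = 1 := by norm_num
  rw [h1, one_pow, mul_one]
  rw [div_le_iff₀ (by positivity : (0:ℝ) < ((r-1).factorial : ℝ))]
  have hfac : (1:ℝ) ≤ ((r-1).factorial : ℝ) := by exact_mod_cast Nat.one_le_iff_ne_zero.mpr (Nat.factorial_ne_zero _)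
  nlinarith [pow_nonneg ha r, pow_nonneg (by positivity : (0:ℝ) ≤ (s:ℝ)) r,
    mul_nonneg (mul_nonneg (pow_nonneg (by positivity : (0:ℝ) ≤ (s:ℝ)) r) (pow_nonneg ha r)) hM]

lemma factor_Icc_vol (k : ℕ) (hk : 1 ≤ k) :
    volume (Set.Icc (-(1 / (2 * (k : ℝ)))) (1 / (2 * (k : ℝ)))) = ENNReal.ofReal ((k:ℝ)⁻¹) := by
  have hkpos : (0:ℝ) < k := by exact_mod_cast hk
  rw [Real.volume_Icc]
  congr 1
  rw [show 1 / (2 * (k:ℝ)) - -(1 / (2 * (k:ℝ))) = (k:ℝ)⁻¹ by field_simp; norm_num]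

lemma factor_prob (k : ℕ) (hk : 1 ≤ k) :
    IsProbabilityMeasure ((volume (Set.Icc (-(1 / (2 * (k : ℝ)))) (1 / (2 * (k : ℝ)))))⁻¹ •
      volume.restrict (Set.Icc (-(1 / (2 * (k : ℝ)))) (1 / (2 * (k : ℝ))))) := by
  have hkpos : (0:ℝ) < k := by exact_mod_cast hk
  constructor
  rw [Measure.smul_apply, Measure.restrict_apply_univ, smul_eq_mul, factor_Icc_vol k hk]
  rw [ENNReal.inv_mul_cancel]
  · simp only [ne_eq, ENNReal.ofReal_eq_zero, not_le]
    positivity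
  · exact ENNReal.ofReal_ne_top

lemma cube_prob (s k : ℕ) (hk : 1 ≤ k) : IsProbabilityMeasure (cubeMeasure s k) := by
  haveI : ∀ _i : Fin s, IsProbabilityMeasure
      ((volume (Set.Icc (-(1 / (2 * (k : ℝ)))) (1 / (2 * (k : ℝ)))))⁻¹ •
        volume.restrict (Set.Icc (-(1 / (2 * (k : ℝ)))) (1 / (2 * (k : ℝ))))) :=
    fun _ => factor_prob k hk
  unfold cubeMeasure
  infer_instance

lemma cube_ae_mem (s k : ℕ) (hk : 1 ≤ k) :
    ∀ᵐ v ∂(cubeMeasure s k), ∀ i, v i ∈ Set.Icc (-(1 / (2 * (k : ℝ)))) (1 / (2 * (k : ℝ))) := by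
  unfold cubeMeasure
  set I := Set.Icc (-(1 / (2 * (k : ℝ)))) (1 / (2 * (k : ℝ))) with hI
  haveI : IsProbabilityMeasure ((volume I)⁻¹ • volume.restrict I) := factor_prob k hk
  have hfac : ∀ᵐ x ∂((volume I)⁻¹ • volume.restrict I), x ∈ I := by
    refine MeasureTheory.ae_iff.mpr ?_
    have hset : {x : ℝ | ¬ x ∈ I} = Iᶜ := rfl
    rw [hset, Measure.smul_apply, Measure.restrict_apply (measurableSet_Icc.compl),
      Set.compl_inter_self]
    simp
  have hev := Filter.eventually_pi
    (f := fun _ : Fin s => MeasureTheory.ae ((volume I)⁻¹ • volume.restrict I))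
    (p := fun _ x => x ∈ I) (fun _ => hfac)
  exact Filter.le_def.mp (MeasureTheory.Measure.ae_pi_le_pi) _ hev

lemma cube_restrict (s k : ℕ) (hk : 1 ≤ k) :
    (cubeMeasure s k).restrict
      (Set.pi Set.univ fun _ : Fin s => Set.Icc (-(1 / (2 * (k : ℝ)))) (1 / (2 * (k : ℝ)))) =
      cubeMeasure s k := by
  apply MeasureTheory.Measure.restrict_eq_self_of_ae_mem
  filter_upwards [cube_ae_mem s k hk] with v hv
  exact Set.mem_univ_pi.mpr fun i => hv i

lemma integral_diff_bound {s : ℕ} {μ : Measure (Fin s → ℝ)} [IsProbabilityMeasure μ]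
    {Q : Set (Fin s → ℝ)} (hQ : MeasurableSet Q) (hres : μ.restrict Q = μ)
    {h : (Fin s → ℝ) → ℝ} (hcont : ContinuousOn h Q)
    {u : Fin s → ℝ}
    {D : ℝ} (hdiff : ∀ v ∈ Q, |h u - h v| ≤ D) :
    |h u - ∫ v, h v ∂μ| ≤ D := by
  have haemem : ∀ᵐ v ∂μ, v ∈ Q := by
    rw [← hres]
    exact ae_restrict_mem hQ
  have hmeas : AEStronglyMeasurable h μ := by
    rw [← hres]
    exact hcont.aestronglyMeasurable hQ
  have hint : Integrable h μ := by
    refine ⟨hmeas, HasFiniteIntegral.of_bounded (C := |h u| + D) ?_⟩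
    filter_upwards [haemem] with v hv
    have h1 := hdiff v hv
    rw [Real.norm_eq_abs]
    have h2 : |h v| - |h u| ≤ |h u - h v| := by
      calc |h v| - |h u| ≤ |h v - h u| := abs_sub_abs_le_abs_sub _ _
        _ = |h u - h v| := abs_sub_comm _ _
    linarith
  have heq : h u - ∫ v, h v ∂μ = ∫ v, (h u - h v) ∂μ := by
    rw [integral_sub (integrable_const _) hint, integral_const]
    simp
  rw [heq, ← Real.norm_eq_abs]
  have := norm_integral_le_of_norm_le_const (μ := μ) (f := fun v => h u - h v) (C := D) ?_
  · simpa using this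
  · filter_upwards [haemem] with v hv
    rw [Real.norm_eq_abs]
    exact hdiff v hv

/-- Key lemma (Lemma `main`): if `f ∈ C^r([0,1]^s)` with `r`-th derivatives bounded by `M`
and the numerical derivatives `D̂^α_k f(c)` satisfy
`|D̂^α_k f(c) - D^α f(c)| ≤ C_{|α|} M k^{-(r-|α|)}` at every centre `c` of the
stratification for all `|α| < r`, then there is a constant `Ĉ_{s,r} < ∞`, independent of
`k` and `f`, such that `h_{k,c}(u) = h̄_{k,c}(u) - E[h̄_{k,c}(U_c)]` satisfies
`|h_{k,c}(u)| ≤ Ĉ_{s,r} M k^{-r}` for all centres `c` and all `u ∈ [-1/(2k), 1/(2k)]^s`. -/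
theorem stmt_14 (s r : ℕ) (hs : 1 ≤ s) (hr : 1 ≤ r) (C : ℕ → ℝ) :
    ∃ Chat : ℝ, ∀ k : ℕ, r ≤ k →
      ∀ f : (Fin s → ℝ) → ℝ, ContDiffOn ℝ (r : ℕ∞) f (Set.Icc 0 1) →
      ∀ M : ℝ,
      (∀ x ∈ Set.Icc (0 : Fin s → ℝ) 1, ∀ m : Fin r → Fin s,
        |iteratedFDerivWithin ℝ r f (Set.Icc 0 1) x (fun p => Pi.single (m p) 1)| ≤ M) →
      ∀ Dhat : (Fin s → ℕ) → (Fin s → ℝ) → ℝ,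
      (∀ l : ℕ, l < r → ∀ α ∈ Finset.Nat.antidiagonalTuple s l,
        ∀ j : Fin s → Fin k, ∀ m : Fin l → Fin s,
        (∀ i : Fin s, (Finset.univ.filter fun p => m p = i).card = α i) →
        |Dhat α (fun i => (2 * ((j i : ℕ) : ℝ) + 1) / (2 * (k : ℝ))) -
            iteratedFDerivWithin ℝ l f (Set.Icc 0 1)
              (fun i => (2 * ((j i : ℕ) : ℝ) + 1) / (2 * (k : ℝ)))
              (fun p => Pi.single (m p) 1)|
          ≤ C l * M * ((k : ℝ) ^ (r - l))⁻¹) →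
      ∀ j : Fin s → Fin k, ∀ u : Fin s → ℝ, (∀ i, |u i| ≤ 1 / (2 * (k : ℝ))) →
      |hbar s r k f Dhat (fun i => (2 * ((j i : ℕ) : ℝ) + 1) / (2 * (k : ℝ))) u -
          ∫ v, hbar s r k f Dhat
            (fun i => (2 * ((j i : ℕ) : ℝ) + 1) / (2 * (k : ℝ))) v ∂(cubeMeasure s k)|
        ≤ Chat * M * ((k : ℝ) ^ r)⁻¹ := by
  classical
  refine ⟨2 * ((s:ℝ)^r + ∑ l ∈ Finset.Ico 1 r, (s:ℝ)^l * |C l|), ?_⟩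
  intro k hk f hf M hM Dhat hD j u hu
  set B : ℝ := (s:ℝ)^r + ∑ l ∈ Finset.Ico 1 r, (s:ℝ)^l * |C l| with hB
  set S := Set.Icc (0 : Fin s → ℝ) 1 with hSdef
  set c : Fin s → ℝ := fun i => (2 * ((j i : ℕ) : ℝ) + 1) / (2 * (k : ℝ)) with hc
  have hk1 : 1 ≤ k := le_trans hr hk
  have hkpos : (0:ℝ) < k := by exact_mod_cast hk1
  have hapos : (0:ℝ) < 1 / (2 * (k:ℝ)) := by positivity
  have hM0 : 0 ≤ M :=
    le_trans (abs_nonneg _) (hM 0 ⟨le_refl _, zero_le_one⟩ (fun _ => ⟨0, hs⟩))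
  have hkr0 : (0:ℝ) < ((k:ℝ)^r)⁻¹ := by positivity
  -- the segment from c stays in the unit cube
  have hmap : ∀ w : Fin s → ℝ, (∀ i, |w i| ≤ 1 / (2 * (k:ℝ))) →
      ∀ t : ℝ, t ∈ Set.Icc (0:ℝ) 1 → c + t • w ∈ S := by
    intro w hw t ht
    obtain ⟨ht0, ht1⟩ := ht
    rw [hSdef, Set.mem_Icc]
    constructor <;> rw [Pi.le_def] <;> intro i
    · have htw : |t * w i| ≤ 1 / (2 * (k:ℝ)) := by
        rw [abs_mul, abs_of_nonneg ht0]
        calc t * |w i| ≤ 1 * (1 / (2 * (k:ℝ))) := by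
              apply mul_le_mul ht1 (hw i) (abs_nonneg _) zero_le_one
          _ = 1 / (2 * (k:ℝ)) := one_mul _
      have h1 := (abs_le.mp htw).1
      have hji : (0:ℝ) ≤ ((j i : ℕ) : ℝ) := Nat.cast_nonneg _
      show (0:Fin s→ℝ) i ≤ c i + t * w i
      show (0:ℝ) ≤ (2 * ((j i : ℕ) : ℝ) + 1) / (2 * (k : ℝ)) + t * w i
      have heq : (2 * ((j i : ℕ) : ℝ) + 1) / (2 * (k : ℝ)) =
          2 * ((j i : ℕ) : ℝ) * (1 / (2 * (k:ℝ))) + 1 / (2 * (k:ℝ)) := by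
        field_simp
      rw [heq]
      nlinarith [mul_nonneg (mul_nonneg (by norm_num : (0:ℝ) ≤ 2) hji) hapos.le]
    · have htw : |t * w i| ≤ 1 / (2 * (k:ℝ)) := by
        rw [abs_mul, abs_of_nonneg ht0]
        calc t * |w i| ≤ 1 * (1 / (2 * (k:ℝ))) := by
              apply mul_le_mul ht1 (hw i) (abs_nonneg _) zero_le_one
          _ = 1 / (2 * (k:ℝ)) := one_mul _
      have h1 := (abs_le.mp htw).2
      have hjk : ((j i : ℕ) : ℝ) + 1 ≤ (k:ℝ) := by
        have := (j i).isLt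
        exact_mod_cast Nat.succ_le_of_lt this
      show c i + t * w i ≤ (1:Fin s→ℝ) i
      show (2 * ((j i : ℕ) : ℝ) + 1) / (2 * (k : ℝ)) + t * w i ≤ 1
      have heq : (2 * ((j i : ℕ) : ℝ) + 1) / (2 * (k : ℝ)) =
          2 * ((j i : ℕ) : ℝ) * (1 / (2 * (k:ℝ))) + 1 / (2 * (k:ℝ)) := by
        field_simp
      rw [heq]
      have h2k : 2 * (k:ℝ) * (1 / (2 * (k:ℝ))) = 1 := by field_simp
      nlinarith [mul_nonneg (sub_nonneg.mpr hjk) hapos.le]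
  -- power comparison
  have hpow : ∀ l : ℕ, l ≤ r → (1 / (2 * (k:ℝ)))^l * ((k:ℝ)^(r-l))⁻¹ ≤ ((k:ℝ)^r)⁻¹ := by
    intro l hl
    have h1 : (1 / (2 * (k:ℝ)))^l ≤ ((k:ℝ)⁻¹)^l := by
      apply pow_le_pow_left₀ hapos.le
      rw [div_le_iff₀ (by positivity)]
      rw [inv_mul_eq_div, le_div_iff₀ hkpos]
      nlinarith
    calc (1 / (2 * (k:ℝ)))^l * ((k:ℝ)^(r-l))⁻¹ ≤ ((k:ℝ)⁻¹)^l * ((k:ℝ)^(r-l))⁻¹ := by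
          apply mul_le_mul_of_nonneg_right h1 (by positivity)
      _ = ((k:ℝ)^r)⁻¹ := by
          rw [inv_pow, ← mul_inv, ← pow_add, Nat.add_sub_cancel' hl]
  -- central estimate
  have key : ∀ w : Fin s → ℝ, (∀ i, |w i| ≤ 1 / (2 * (k:ℝ))) →
      |f (c + w) - f c - ∑ l ∈ Finset.Ico 1 r, ∑ α ∈ Finset.Nat.antidiagonalTuple s l,
          Dhat α c / ((∏ i, (α i).factorial : ℕ) : ℝ) * ∏ i, w i ^ α i|
        ≤ B * (M * ((k:ℝ)^r)⁻¹) := by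
    intro w hw
    have htay := taylor_segment s r hr hf hapos.le hM0 hM c w hw (hmap w hw)
    -- split off the l = 0 term of the Taylor polynomial
    have hsplit : ∑ l ∈ Finset.range r, ((l.factorial : ℝ))⁻¹ *
        ∑ m : Fin l → Fin s, (∏ p, w (m p)) *
          iteratedFDerivWithin ℝ l f S c (fun p => Pi.single (m p) 1)
        = f c + ∑ l ∈ Finset.Ico 1 r, ((l.factorial : ℝ))⁻¹ *
            ∑ m : Fin l → Fin s, (∏ p, w (m p)) *
              iteratedFDerivWithin ℝ l f S c (fun p => Pi.single (m p) 1) := by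
      rw [Finset.range_eq_Ico, Finset.sum_eq_sum_Ico_succ_bot (by omega : 0 < r)]
      congr 1
      simp [iteratedFDerivWithin_zero_apply]
    -- per-level error
    have hlevel : ∀ l ∈ Finset.Ico 1 r,
        |((l.factorial : ℝ))⁻¹ * ∑ m : Fin l → Fin s, (∏ p, w (m p)) *
            iteratedFDerivWithin ℝ l f S c (fun p => Pi.single (m p) 1)
          - ∑ α ∈ Finset.Nat.antidiagonalTuple s l,
              Dhat α c / ((∏ i, (α i).factorial : ℕ) : ℝ) * ∏ i, w i ^ α i|
          ≤ (s:ℝ)^l * |C l| * (M * ((k:ℝ)^r)⁻¹) := by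
      intro l hl
      obtain ⟨hl1, hlr⟩ := Finset.mem_Ico.mp hl
      -- rewrite the α-sum as a sum over m via counting
      have hswap : ∑ α ∈ Finset.Nat.antidiagonalTuple s l,
          Dhat α c / ((∏ i, (α i).factorial : ℕ) : ℝ) * ∏ i, w i ^ α i
          = ((l.factorial : ℝ))⁻¹ * ∑ m : Fin l → Fin s,
              (∏ p, w (m p)) * Dhat (cnt m) c := by
        have h1 := sum_cnt_eq (s := s) (l := l)
          (fun α => (∏ i, w i ^ α i) * Dhat α c)
        calc ∑ α ∈ Finset.Nat.antidiagonalTuple s l,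
            Dhat α c / ((∏ i, (α i).factorial : ℕ) : ℝ) * ∏ i, w i ^ α i
            = ∑ α ∈ Finset.Nat.antidiagonalTuple s l, ((l.factorial : ℝ))⁻¹ *
                (((l.factorial : ℝ) / ∏ i, ((α i).factorial : ℝ)) *
                  ((∏ i, w i ^ α i) * Dhat α c)) := by
              refine Finset.sum_congr rfl fun α hα => ?_
              have hfacpos : (0:ℝ) < ∏ i, ((α i).factorial : ℝ) := by
                apply Finset.prod_pos; intro i _; exact_mod_cast Nat.factorial_pos _
              have hlfac : (0:ℝ) < (l.factorial : ℝ) := by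
                exact_mod_cast Nat.factorial_pos l
              have hcast : ((∏ i, (α i).factorial : ℕ) : ℝ) = ∏ i, ((α i).factorial : ℝ) := by
                push_cast; ring
              rw [hcast]
              field_simp
          _ = ((l.factorial : ℝ))⁻¹ * ∑ α ∈ Finset.Nat.antidiagonalTuple s l,
                ((l.factorial : ℝ) / ∏ i, ((α i).factorial : ℝ)) *
                  ((∏ i, w i ^ α i) * Dhat α c) := (Finset.mul_sum _ _ _).symm
          _ = ((l.factorial : ℝ))⁻¹ * ∑ m : Fin l → Fin s,
                (∏ i, w i ^ cnt m i) * Dhat (cnt m) c :=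
              congrArg (fun z => ((l.factorial : ℝ))⁻¹ * z) h1.symm
          _ = ((l.factorial : ℝ))⁻¹ * ∑ m : Fin l → Fin s,
                (∏ p, w (m p)) * Dhat (cnt m) c := by
              congr 1
              exact Finset.sum_congr rfl fun m _ => by rw [prod_cnt m w]
      rw [hswap, ← mul_sub, ← Finset.sum_sub_distrib]
      rw [abs_mul]
      have hfl1 : |((l.factorial : ℝ))⁻¹| ≤ 1 := by
        rw [abs_inv, Nat.abs_cast]
        rw [inv_le_one_iff₀]
        right
        exact_mod_cast Nat.one_le_iff_ne_zero.mpr (Nat.factorial_ne_zero l)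
      have hterm : ∀ m : Fin l → Fin s,
          |(∏ p, w (m p)) * iteratedFDerivWithin ℝ l f S c (fun p => Pi.single (m p) 1)
            - (∏ p, w (m p)) * Dhat (cnt m) c|
          ≤ (1 / (2 * (k:ℝ)))^l * (C l * M * ((k:ℝ)^(r-l))⁻¹) := by
        intro m
        rw [← mul_sub, abs_mul]
        have h1 : |∏ p, w (m p)| ≤ (1 / (2 * (k:ℝ)))^l := by
          rw [abs_prod]
          calc ∏ p, |w (m p)| ≤ ∏ _p : Fin l, (1 / (2 * (k:ℝ))) :=
                Finset.prod_le_prod (fun p _ => abs_nonneg _) (fun p _ => hw (m p))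
            _ = (1 / (2 * (k:ℝ)))^l := by
                rw [Finset.prod_const, Finset.card_univ, Fintype.card_fin]
        have h2 : |iteratedFDerivWithin ℝ l f S c (fun p => Pi.single (m p) 1)
            - Dhat (cnt m) c| ≤ C l * M * ((k:ℝ)^(r-l))⁻¹ := by
          rw [abs_sub_comm]
          exact hD l hlr (cnt m)
            (Finset.Nat.mem_antidiagonalTuple.mpr (cnt_sum m)) j m
            (fun i => (cnt_def m i).symm)
        exact mul_le_mul h1 h2 (abs_nonneg _) (by positivity)
      calc |((l.factorial : ℝ))⁻¹| * |∑ m : Fin l → Fin s,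
            ((∏ p, w (m p)) * iteratedFDerivWithin ℝ l f S c (fun p => Pi.single (m p) 1)
              - (∏ p, w (m p)) * Dhat (cnt m) c)|
          ≤ 1 * |∑ m : Fin l → Fin s,
            ((∏ p, w (m p)) * iteratedFDerivWithin ℝ l f S c (fun p => Pi.single (m p) 1)
              - (∏ p, w (m p)) * Dhat (cnt m) c)| :=
            mul_le_mul_of_nonneg_right hfl1 (abs_nonneg _)
        _ = |∑ m : Fin l → Fin s,
            ((∏ p, w (m p)) * iteratedFDerivWithin ℝ l f S c (fun p => Pi.single (m p) 1)
              - (∏ p, w (m p)) * Dhat (cnt m) c)| := one_mul _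
        _ ≤ ∑ m : Fin l → Fin s,
            |(∏ p, w (m p)) * iteratedFDerivWithin ℝ l f S c (fun p => Pi.single (m p) 1)
              - (∏ p, w (m p)) * Dhat (cnt m) c| := Finset.abs_sum_le_sum_abs _ _
        _ ≤ ∑ _m : Fin l → Fin s, (1 / (2 * (k:ℝ)))^l * (C l * M * ((k:ℝ)^(r-l))⁻¹) :=
            Finset.sum_le_sum (fun m _ => hterm m)
        _ = (s:ℝ)^l * ((1 / (2 * (k:ℝ)))^l * (C l * M * ((k:ℝ)^(r-l))⁻¹)) := by
            rw [Finset.sum_const, Finset.card_univ, Fintype.card_fun]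
            simp [nsmul_eq_mul, Fintype.card_fin]
        _ ≤ (s:ℝ)^l * |C l| * (M * ((k:ℝ)^r)⁻¹) := by
            have hCl : C l * M * ((k:ℝ)^(r-l))⁻¹ ≤ |C l| * (M * ((k:ℝ)^(r-l))⁻¹) := by
              rw [← mul_assoc]
              apply mul_le_mul_of_nonneg_right _ (by positivity)
              exact mul_le_mul_of_nonneg_right (le_abs_self _) hM0
            have hnn : (0:ℝ) ≤ |C l| * M := mul_nonneg (abs_nonneg _) hM0
            calc (s:ℝ)^l * ((1 / (2 * (k:ℝ)))^l * (C l * M * ((k:ℝ)^(r-l))⁻¹))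
                ≤ (s:ℝ)^l * ((1 / (2 * (k:ℝ)))^l * (|C l| * (M * ((k:ℝ)^(r-l))⁻¹))) := by
                  apply mul_le_mul_of_nonneg_left _ (by positivity)
                  apply mul_le_mul_of_nonneg_left hCl (by positivity)
              _ = (s:ℝ)^l * |C l| * (M * ((1 / (2 * (k:ℝ)))^l * ((k:ℝ)^(r-l))⁻¹)) := by ring
              _ ≤ (s:ℝ)^l * |C l| * (M * ((k:ℝ)^r)⁻¹) := by
                  apply mul_le_mul_of_nonneg_left _ (by positivity)
                  exact mul_le_mul_of_nonneg_left (hpow l (le_of_lt hlr)) hM0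
    -- assemble
    have hdecomp : f (c + w) - f c - ∑ l ∈ Finset.Ico 1 r,
        ∑ α ∈ Finset.Nat.antidiagonalTuple s l,
          Dhat α c / ((∏ i, (α i).factorial : ℕ) : ℝ) * ∏ i, w i ^ α i
        = (f (c + w) - ∑ l ∈ Finset.range r, ((l.factorial : ℝ))⁻¹ *
            ∑ m : Fin l → Fin s, (∏ p, w (m p)) *
              iteratedFDerivWithin ℝ l f S c (fun p => Pi.single (m p) 1))
          + ∑ l ∈ Finset.Ico 1 r,
              (((l.factorial : ℝ))⁻¹ * ∑ m : Fin l → Fin s, (∏ p, w (m p)) *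
                iteratedFDerivWithin ℝ l f S c (fun p => Pi.single (m p) 1)
              - ∑ α ∈ Finset.Nat.antidiagonalTuple s l,
                  Dhat α c / ((∏ i, (α i).factorial : ℕ) : ℝ) * ∏ i, w i ^ α i) := by
      rw [Finset.sum_sub_distrib, hsplit]
      ring
    rw [hdecomp]
    calc |_| ≤ |f (c + w) - ∑ l ∈ Finset.range r, ((l.factorial : ℝ))⁻¹ *
            ∑ m : Fin l → Fin s, (∏ p, w (m p)) *
              iteratedFDerivWithin ℝ l f S c (fun p => Pi.single (m p) 1)|
          + |∑ l ∈ Finset.Ico 1 r,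
              (((l.factorial : ℝ))⁻¹ * ∑ m : Fin l → Fin s, (∏ p, w (m p)) *
                iteratedFDerivWithin ℝ l f S c (fun p => Pi.single (m p) 1)
              - ∑ α ∈ Finset.Nat.antidiagonalTuple s l,
                  Dhat α c / ((∏ i, (α i).factorial : ℕ) : ℝ) * ∏ i, w i ^ α i)| :=
          abs_add_le _ _
      _ ≤ (s:ℝ)^r * (1 / (2 * (k:ℝ)))^r * M
          + ∑ l ∈ Finset.Ico 1 r, (s:ℝ)^l * |C l| * (M * ((k:ℝ)^r)⁻¹) := by
          apply add_le_add htay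
          exact le_trans (Finset.abs_sum_le_sum_abs _ _) (Finset.sum_le_sum hlevel)
      _ ≤ (s:ℝ)^r * (M * ((k:ℝ)^r)⁻¹)
          + ∑ l ∈ Finset.Ico 1 r, (s:ℝ)^l * |C l| * (M * ((k:ℝ)^r)⁻¹) := by
          apply add_le_add_left
          have h1 : (1 / (2 * (k:ℝ)))^r ≤ ((k:ℝ)^r)⁻¹ := by
            have := hpow r le_rfl
            simpa using this
          calc (s:ℝ)^r * (1 / (2 * (k:ℝ)))^r * M ≤ (s:ℝ)^r * ((k:ℝ)^r)⁻¹ * M := by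
                apply mul_le_mul_of_nonneg_right _ hM0
                exact mul_le_mul_of_nonneg_left h1 (by positivity)
            _ = (s:ℝ)^r * (M * ((k:ℝ)^r)⁻¹) := by ring
      _ = B * (M * ((k:ℝ)^r)⁻¹) := by
          rw [hB, add_mul, ← Finset.sum_mul]
  -- difference of hbar values
  have hIcc : Finset.Icc 1 (r-1) = Finset.Ico 1 r := by
    ext x
    simp only [Finset.mem_Icc, Finset.mem_Ico]
    omega
  have hbar_eq : ∀ w : Fin s → ℝ, hbar s r k f Dhat c w =
      (f (c + w) - f c - ∑ l ∈ Finset.Ico 1 r, ∑ α ∈ Finset.Nat.antidiagonalTuple s l,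
        Dhat α c / ((∏ i, (α i).factorial : ℕ) : ℝ) * ∏ i, w i ^ α i)
      + (f c + ∑ l ∈ Finset.Ico 1 r, ∑ α ∈ Finset.Nat.antidiagonalTuple s l,
          Dhat α c / ((∏ i, (α i).factorial : ℕ) : ℝ) * ∏ i, dk k (α i)) := by
    intro w
    rw [hbar, hIcc]
    rw [Finset.sum_congr rfl (fun l _ => Finset.sum_congr rfl (fun α _ => mul_sub
      (Dhat α c / ((∏ i, (α i).factorial : ℕ) : ℝ)) (∏ i, w i ^ α i) (∏ i, dk k (α i))))]
    rw [Finset.sum_congr rfl (fun l (_ : l ∈ Finset.Ico 1 r) => Finset.sum_sub_distrib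
      (s := Finset.Nat.antidiagonalTuple s l) _ _), Finset.sum_sub_distrib]
    ring
  have hdiffb : ∀ v : Fin s → ℝ, (∀ i, |v i| ≤ 1 / (2 * (k:ℝ))) →
      |hbar s r k f Dhat c u - hbar s r k f Dhat c v|
        ≤ 2 * B * M * ((k:ℝ)^r)⁻¹ := by
    intro v hv
    rw [hbar_eq u, hbar_eq v]
    have h1 := key u hu
    have h2 := key v hv
    calc |_| ≤ B * (M * ((k:ℝ)^r)⁻¹) + B * (M * ((k:ℝ)^r)⁻¹) := by
          rw [show ((f (c + u) - f c - ∑ l ∈ Finset.Ico 1 r, ∑ α ∈ Finset.Nat.antidiagonalTuple s l,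
              Dhat α c / ((∏ i, (α i).factorial : ℕ) : ℝ) * ∏ i, u i ^ α i) + _)
            - ((f (c + v) - f c - ∑ l ∈ Finset.Ico 1 r, ∑ α ∈ Finset.Nat.antidiagonalTuple s l,
              Dhat α c / ((∏ i, (α i).factorial : ℕ) : ℝ) * ∏ i, v i ^ α i) + _)
            = (f (c + u) - f c - ∑ l ∈ Finset.Ico 1 r, ∑ α ∈ Finset.Nat.antidiagonalTuple s l,
              Dhat α c / ((∏ i, (α i).factorial : ℕ) : ℝ) * ∏ i, u i ^ α i)
            - (f (c + v) - f c - ∑ l ∈ Finset.Ico 1 r, ∑ α ∈ Finset.Nat.antidiagonalTuple s l,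
              Dhat α c / ((∏ i, (α i).factorial : ℕ) : ℝ) * ∏ i, v i ^ α i) by ring]
          exact le_trans (abs_sub _ _) (add_le_add h1 h2)
      _ = 2 * B * M * ((k:ℝ)^r)⁻¹ := by ring
  -- conclude via the probability integral bound
  haveI := cube_prob s k hk1
  set Q : Set (Fin s → ℝ) :=
    Set.pi Set.univ fun _ : Fin s => Set.Icc (-(1 / (2 * (k : ℝ)))) (1 / (2 * (k : ℝ))) with hQ
  have hQmeas : MeasurableSet Q := MeasurableSet.univ_pi (fun _ => measurableSet_Icc)
  have hres : (cubeMeasure s k).restrict Q = cubeMeasure s k := cube_restrict s k hk1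
  have hQabs : ∀ v ∈ Q, ∀ i, |v i| ≤ 1 / (2 * (k:ℝ)) := by
    intro v hv i
    have := (Set.mem_univ_pi.mp hv) i
    rw [Set.mem_Icc] at this
    exact abs_le.mpr this
  have hcont : ContinuousOn (fun v => hbar s r k f Dhat c v) Q := by
    have hfc : ContinuousOn (fun v : Fin s → ℝ => f (c + v)) Q := by
      apply ContinuousOn.comp hf.continuousOn
      · exact (continuous_const.add continuous_id).continuousOn
      · intro v hv
        have := hmap v (hQabs v hv) 1 ⟨zero_le_one, le_refl 1⟩
        simpa using this
    apply ContinuousOn.sub hfc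
    apply Continuous.continuousOn
    apply continuous_finset_sum
    intro l _
    apply continuous_finset_sum
    intro α _
    apply Continuous.mul continuous_const
    apply Continuous.sub _ continuous_const
    apply continuous_finset_prod
    intro i _
    exact (continuous_apply i).pow _
  have hfinal := integral_diff_bound (μ := cubeMeasure s k) hQmeas hres hcont
    (u := u) (D := 2 * B * M * ((k:ℝ)^r)⁻¹)
    (fun v hv => hdiffb v (hQabs v hv))
  calc |hbar s r k f Dhat c u - ∫ v, hbar s r k f Dhat c v ∂(cubeMeasure s k)|
      ≤ 2 * B * M * ((k:ℝ)^r)⁻¹ := hfinal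
    _ = 2 * B * M * ((k:ℝ)^r)⁻¹ := rfl
end

section
/- Let $r\geq 1$ and let $g\in\mathcal{C}^r(\mathbb{R})\cap L_1(\mathbb{R})$ satisfy $\lim_{|x|\to\infty}|x|^c\,|g^{(a)}(x)|=0$ for all $c>0$ and all $0\leq a\leq r$. With $\psi_1(u)=\frac{2u-1}{u^\tau(1-u)^\tau}$ for some fixed $\tau>0$, the function $f(u)=g(\psi_1(u))\,\psi_1'(u)$ on $(0,1)$ extends to a function in $\mathcal{C}^r_0([0,1])$ (i.e. $f$ and all its derivatives up to order $r$ extend continuously by $0$ at $u=0$ and $u=1$), and $\int_0^1 f(u)\,du=\int_{\mathbb{R}}g(x)\,dx$. -/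
open Filter

open Set Topology

namespace Stmt17Aux

structure Tm where
  a : ℕ
  m : ℕ
  s : ℝ
  c : ℝ

noncomputable def Tm.eval (g ψ : ℝ → ℝ) (t : Tm) (u : ℝ) : ℝ :=
  t.c * iteratedDeriv t.a g (ψ u) * (2*u-1)^t.m * (u*(1-u)) ^ (-t.s)

def Tm.D (τ : ℝ) (t : Tm) : List Tm :=
  [⟨t.a+1, t.m, t.s+τ, 2*t.c⟩, ⟨t.a+1, t.m+2, t.s+τ+1, τ*t.c⟩,
   ⟨t.a, t.m-1, t.s, 2*t.m*t.c⟩, ⟨t.a, t.m+1, t.s+1, t.s*t.c⟩]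

def LL (τ : ℝ) : ℕ → List Tm
  | 0 => [⟨0,0,τ,2⟩, ⟨0,2,τ+1,τ⟩]
  | k+1 => (LL τ k).flatMap (Tm.D τ)

noncomputable def dd (g ψ : ℝ → ℝ) (τ : ℝ) (k : ℕ) (u : ℝ) : ℝ :=
  ((LL τ k).map (fun t => t.eval g ψ u)).sum

lemma mem_LL_a_le (τ : ℝ) : ∀ k, ∀ t ∈ LL τ k, t.a ≤ k := by
  intro k
  induction k with
  | zero => intro t ht; simp [LL] at ht; rcases ht with h | h <;> simp [h]
  | succ k ih =>
    intro t ht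
    simp only [LL, List.mem_flatMap] at ht
    obtain ⟨t', ht', htD⟩ := ht
    have := ih t' ht'
    simp [Tm.D] at htD
    rcases htD with h | h | h | h <;> (subst h; simp; omega)

lemma sum_bind_map (l : List Tm) (f : Tm → List Tm) (e : Tm → ℝ) :
    ((l.flatMap f).map e).sum = (l.map (fun t => ((f t).map e).sum)).sum := by
  induction l with
  | nil => simp
  | cons t l ih => simp [ih]

lemma sum_hasDerivAt (l : List Tm) (e : Tm → ℝ → ℝ) (e' : Tm → ℝ) (u : ℝ)
    (h : ∀ t ∈ l, HasDerivAt (e t) (e' t) u) :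
    HasDerivAt (fun x => (l.map (fun t => e t x)).sum) ((l.map e').sum) u := by
  induction l with
  | nil => simpa using hasDerivAt_const u (0:ℝ)
  | cons t l ih =>
    simp only [List.map_cons, List.sum_cons]
    exact (h t (by simp)).add (ih (fun t' ht' => h t' (by simp [ht'])))

lemma sum_tendsto (l : List Tm) (e : Tm → ℝ → ℝ) (fl : Filter ℝ)
    (h : ∀ t ∈ l, Tendsto (e t) fl (𝓝 0)) :
    Tendsto (fun u => (l.map (fun t => e t u)).sum) fl (𝓝 0) := by
  induction l with
  | nil => simpa using tendsto_const_nhds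
  | cons t l ih =>
    simp only [List.map_cons, List.sum_cons]
    simpa using (h t (by simp)).add (ih (fun t' ht' => h t' (by simp [ht'])))

end Stmt17Aux

namespace Stmt17Aux

noncomputable def φf (τ : ℝ) (u : ℝ) : ℝ := (2*u-1) * (u*(1-u)) ^ (-τ)
noncomputable def φf' (τ : ℝ) (u : ℝ) : ℝ :=
  2*(u*(1-u))^(-τ) + τ*(2*u-1)^2*(u*(1-u))^(-(τ+1))

lemma hvpos {u : ℝ} (hu : u ∈ Ioo (0:ℝ) 1) : 0 < u*(1-u) := by
  have h1 := hu.1; have h2 := hu.2; nlinarith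

section psi
variable {τ : ℝ} {ψ ψ' : ℝ → ℝ}

lemma psi_eq (hψ : ∀ u : ℝ, ψ u = (2 * u - 1) / (u ^ τ * (1 - u) ^ τ))
    {u : ℝ} (hu : u ∈ Ioo (0:ℝ) 1) : ψ u = φf τ u := by
  have h1 : (0:ℝ) ≤ u := hu.1.le
  have h2 : (0:ℝ) ≤ 1 - u := by linarith [hu.2]
  rw [hψ, φf, Real.rpow_neg (hvpos hu).le, Real.mul_rpow h1 h2, div_eq_mul_inv]

lemma psi'_eq (hψ' : ∀ u : ℝ, ψ' u =
      2 / (u ^ τ * (1 - u) ^ τ) +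
        τ * (2 * u - 1) ^ 2 / (u ^ (τ + 1) * (1 - u) ^ (τ + 1)))
    {u : ℝ} (hu : u ∈ Ioo (0:ℝ) 1) : ψ' u = φf' τ u := by
  have h1 : (0:ℝ) ≤ u := hu.1.le
  have h2 : (0:ℝ) ≤ 1 - u := by linarith [hu.2]
  rw [hψ', φf', Real.rpow_neg (hvpos hu).le, Real.rpow_neg (hvpos hu).le,
    Real.mul_rpow h1 h2, Real.mul_rpow h1 h2, div_eq_mul_inv, div_eq_mul_inv]

lemma phi_hasDeriv {u : ℝ} (hu : u ∈ Ioo (0:ℝ) 1) : HasDerivAt (φf τ) (φf' τ u) u := by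
  have hv := hvpos hu
  have hvd : HasDerivAt (fun u : ℝ => u*(1-u)) (1-2*u) u := by
    have := (hasDerivAt_id u).mul ((hasDerivAt_const u (1:ℝ)).sub (hasDerivAt_id u))
    exact this.congr_deriv (by simp; ring)
  have hrp : HasDerivAt (fun y : ℝ => y ^ (-τ)) (-τ * (u*(1-u)) ^ (-τ-1)) (u*(1-u)) :=
    Real.hasDerivAt_rpow_const (Or.inl hv.ne')
  have hQ : HasDerivAt (fun u : ℝ => (u*(1-u))^(-τ)) ((-τ * (u*(1-u))^(-τ-1)) * (1-2*u)) u :=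
    hrp.comp (h₂ := fun y : ℝ => y ^ (-τ)) u hvd
  have hlin : HasDerivAt (fun u : ℝ => 2*u-1) 2 u := by
    simpa using ((hasDerivAt_id u).const_mul (2:ℝ)).sub_const 1
  have h := hlin.mul hQ
  refine h.congr_deriv ?_
  rw [φf', show -(τ+1) = -τ-1 by ring]
  ring

lemma hasDeriv_rpow_neg (s : ℝ) {u : ℝ} (hu : u ∈ Ioo (0:ℝ) 1) :
    HasDerivAt (fun x : ℝ => (x*(1-x))^(-s)) ((-s * (u*(1-u))^(-s-1)) * (1-2*u)) u := by
  have hv := hvpos hu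
  have hvd : HasDerivAt (fun u : ℝ => u*(1-u)) (1-2*u) u := by
    have := (hasDerivAt_id u).mul ((hasDerivAt_const u (1:ℝ)).sub (hasDerivAt_id u))
    exact this.congr_deriv (by simp; ring)
  exact (Real.hasDerivAt_rpow_const (Or.inl hv.ne')).comp u hvd

end psi
end Stmt17Aux

namespace Stmt17Aux

section main
variable {r : ℕ} {τ : ℝ} {g ψ ψ' : ℝ → ℝ}

lemma eval_hasDerivAt (hg : ContDiff ℝ (r : ℕ∞) g)
    (hψ : ∀ u : ℝ, ψ u = (2 * u - 1) / (u ^ τ * (1 - u) ^ τ))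
    (t : Tm) (har : t.a < r) {u : ℝ} (hu : u ∈ Ioo (0:ℝ) 1) :
    HasDerivAt (t.eval g ψ) (((t.D τ).map (fun t' => t'.eval g ψ u)).sum) u := by
  have hv := hvpos hu
  obtain ⟨a, m, s, c⟩ := t
  simp only [Tm.D, Tm.eval, List.map_cons, List.map_nil, List.sum_cons, List.sum_nil]
  -- derivative of x ↦ iteratedDeriv a g (ψ x)
  have hdiff : Differentiable ℝ (iteratedDeriv a g) :=
    hg.differentiable_iteratedDeriv a (by exact_mod_cast har)
  have h1 : HasDerivAt (iteratedDeriv a g) (iteratedDeriv (a+1) g (φf τ u)) (φf τ u) := by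
    simpa [iteratedDeriv_succ] using (hdiff (φf τ u)).hasDerivAt
  have h2 : HasDerivAt (fun x => iteratedDeriv a g (φf τ x))
      (iteratedDeriv (a+1) g (φf τ u) * φf' τ u) u := h1.comp u (phi_hasDeriv hu)
  have heq : (fun x => iteratedDeriv a g (ψ x)) =ᶠ[nhds u]
      (fun x => iteratedDeriv a g (φf τ x)) := by
    filter_upwards [isOpen_Ioo.mem_nhds hu] with x hx
    rw [psi_eq hψ hx]
  have hG : HasDerivAt (fun x => iteratedDeriv a g (ψ x))
      (iteratedDeriv (a+1) g (φf τ u) * φf' τ u) u := h2.congr_of_eventuallyEq heq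
  have hlin : HasDerivAt (fun x : ℝ => 2*x-1) 2 u := by
    simpa using ((hasDerivAt_id u).const_mul (2:ℝ)).sub_const 1
  have hP : HasDerivAt (fun x : ℝ => (2*x-1)^m) ((m:ℝ) * (2*u-1)^(m-1) * 2) u := hlin.pow m
  have hQ := hasDeriv_rpow_neg s hu
  have hprod := ((hG.const_mul c).mul hP).mul hQ
  refine hprod.congr_deriv ?_
  simp only [psi_eq hψ hu, Pi.mul_apply]
  rw [φf']
  have e1 : (u*(1-u)) ^ (-(s+τ)) = (u*(1-u))^(-s) * (u*(1-u))^(-τ) := by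
    rw [← Real.rpow_add hv]; ring_nf
  have e2 : (u*(1-u)) ^ (-(s+τ+1)) = (u*(1-u))^(-s) * (u*(1-u))^(-(τ+1)) := by
    rw [← Real.rpow_add hv]; ring_nf
  have e3 : (u*(1-u)) ^ (-(s+1)) = (u*(1-u))^(-s-1) := by ring_nf
  rw [e1, e2, e3]
  ring

end main
end Stmt17Aux

namespace Stmt17Aux
section main2
variable {r : ℕ} {τ : ℝ} {g ψ : ℝ → ℝ}

lemma eval_tendsto0 (hτ : 0 < τ)
    (hψ : ∀ u : ℝ, ψ u = (2 * u - 1) / (u ^ τ * (1 - u) ^ τ))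
    (hdecay : ∀ c : ℝ, 0 < c → ∀ a : ℕ, a ≤ r →
      Tendsto (fun x => |x| ^ c * |iteratedDeriv a g x|) (cocompact ℝ) (nhds 0))
    (t : Tm) (har : t.a ≤ r) {fl : Filter ℝ}
    (hev : ∀ᶠ u in fl, u ∈ Ioo (0:ℝ) 1 ∧ 1/2 ≤ |2*u-1|)
    (hco : Tendsto ψ fl (cocompact ℝ)) :
    Tendsto (t.eval g ψ) fl (nhds 0) := by
  set M : ℝ := max t.s 0 + 1 with hM
  have hMpos : 0 < M := by positivity
  have hc0 : 0 < M / τ := by positivity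
  have key := (hdecay (M/τ) hc0 t.a har).comp hco
  have key2 : Tendsto (fun u => |t.c| * (2:ℝ)^(M/τ) *
      (|ψ u| ^ (M/τ) * |iteratedDeriv t.a g (ψ u)|)) fl (nhds 0) := by
    simpa using key.const_mul (|t.c| * (2:ℝ)^(M/τ))
  apply squeeze_zero_norm' ?_ key2
  filter_upwards [hev] with u ⟨hu, hhalf⟩
  have hv := hvpos hu
  have hv1 : u*(1-u) ≤ 1 := by nlinarith [hu.1, hu.2]
  have habs : ‖t.eval g ψ u‖ =
      |t.c| * |iteratedDeriv t.a g (ψ u)| * |2*u-1|^t.m * (u*(1-u))^(-t.s) := by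
    rw [Real.norm_eq_abs, Tm.eval, abs_mul, abs_mul, abs_mul, abs_pow,
      abs_of_nonneg (Real.rpow_nonneg hv.le _)]
  have h1 : |2*u-1|^t.m ≤ 1 :=
    pow_le_one₀ (abs_nonneg _) (by rw [abs_le]; constructor <;> nlinarith [hu.1, hu.2])
  have h2 : (u*(1-u))^(-t.s) ≤ (u*(1-u))^(-M) :=
    Real.rpow_le_rpow_of_exponent_ge hv hv1 (by simp only [hM]; nlinarith [le_max_left t.s 0])
  have h3 : (u*(1-u))^(-M) = ((u*(1-u))^(-τ))^(M/τ) := by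
    rw [← Real.rpow_mul hv.le]
    congr 1
    field_simp
  have h4 : (u*(1-u))^(-τ) ≤ 2 * |ψ u| := by
    have hpsi : |ψ u| = |2*u-1| * (u*(1-u))^(-τ) := by
      rw [psi_eq hψ hu, φf, abs_mul, abs_of_nonneg (Real.rpow_nonneg hv.le _)]
    nlinarith [Real.rpow_nonneg hv.le (-τ)]
  have h5 : ((u*(1-u))^(-τ))^(M/τ) ≤ (2*|ψ u|)^(M/τ) :=
    Real.rpow_le_rpow (Real.rpow_nonneg hv.le _) h4 hc0.le
  have h6 : (2*|ψ u|)^(M/τ) = 2^(M/τ) * |ψ u|^(M/τ) :=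
    Real.mul_rpow (by norm_num) (abs_nonneg _)
  have h7 : (u*(1-u))^(-t.s) ≤ 2^(M/τ) * |ψ u|^(M/τ) := by
    calc (u*(1-u))^(-t.s) ≤ (u*(1-u))^(-M) := h2
    _ = ((u*(1-u))^(-τ))^(M/τ) := h3
    _ ≤ (2*|ψ u|)^(M/τ) := h5
    _ = 2^(M/τ) * |ψ u|^(M/τ) := h6
  rw [habs]
  have hiD : (0:ℝ) ≤ |iteratedDeriv t.a g (ψ u)| := abs_nonneg _
  have hc : (0:ℝ) ≤ |t.c| := abs_nonneg _
  have hA : |2*u-1|^t.m * (u*(1-u))^(-t.s) ≤ 1 * (2^(M/τ) * |ψ u|^(M/τ)) :=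
    mul_le_mul h1 h7 (Real.rpow_nonneg hv.le _) zero_le_one
  calc |t.c| * |iteratedDeriv t.a g (ψ u)| * |2*u-1|^t.m * (u*(1-u))^(-t.s)
      = (|t.c| * |iteratedDeriv t.a g (ψ u)|) * (|2*u-1|^t.m * (u*(1-u))^(-t.s)) := by ring
    _ ≤ (|t.c| * |iteratedDeriv t.a g (ψ u)|) * (1 * (2^(M/τ) * |ψ u|^(M/τ))) :=
        mul_le_mul_of_nonneg_left hA (by positivity)
    _ = |t.c| * (2:ℝ)^(M/τ) * (|ψ u| ^ (M/τ) * |iteratedDeriv t.a g (ψ u)|) := by ring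

end main2
end Stmt17Aux

namespace Stmt17Aux
section main3
variable {r : ℕ} {τ : ℝ} {g ψ : ℝ → ℝ}

lemma v_tendsto_zero_right : Tendsto (fun u : ℝ => u*(1-u)) (nhdsWithin 0 (Ioi 0)) (nhdsWithin 0 (Ioi 0)) := by
  rw [tendsto_nhdsWithin_iff]
  constructor
  · have : ContinuousAt (fun u : ℝ => u*(1-u)) 0 := by fun_prop
    simpa using this.tendsto.mono_left (nhdsWithin_le_nhds (s := Ioi 0))
  · filter_upwards [Ioo_mem_nhdsGT (by norm_num : (0:ℝ) < 1)] with u hu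
    exact hvpos hu

lemma v_tendsto_zero_left : Tendsto (fun u : ℝ => u*(1-u)) (nhdsWithin 1 (Iio 1)) (nhdsWithin 0 (Ioi 0)) := by
  rw [tendsto_nhdsWithin_iff]
  constructor
  · have : ContinuousAt (fun u : ℝ => u*(1-u)) 1 := by fun_prop
    have h := this.tendsto.mono_left (nhdsWithin_le_nhds (s := Iio (1:ℝ)))
    norm_num at h; exact h
  · filter_upwards [Ioo_mem_nhdsLT (by norm_num : (0:ℝ) < 1)] with u hu
    exact hvpos hu

lemma rpow_neg_tendsto_atTop (hτ : 0 < τ) :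
    Tendsto (fun x : ℝ => x ^ (-τ)) (nhdsWithin 0 (Ioi 0)) atTop := by
  have h1 : Tendsto (fun x : ℝ => x ^ τ) (nhdsWithin 0 (Ioi 0)) (nhdsWithin 0 (Ioi 0)) := by
    rw [tendsto_nhdsWithin_iff]
    constructor
    · have : ContinuousAt (fun x : ℝ => x ^ τ) 0 :=
        Real.continuousAt_rpow_const 0 τ (Or.inr hτ.le)
      have h := this.tendsto.mono_left (nhdsWithin_le_nhds (s := Ioi 0))
      simpa [Real.zero_rpow hτ.ne'] using h
    · filter_upwards [self_mem_nhdsWithin] with x hx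
      exact Real.rpow_pos_of_pos hx τ
  have h2 := tendsto_inv_nhdsGT_zero.comp h1
  apply h2.congr'
  filter_upwards [self_mem_nhdsWithin] with x hx
  simp [Real.rpow_neg (le_of_lt hx)]

lemma psi_tendsto_bot (hτ : 0 < τ)
    (hψ : ∀ u : ℝ, ψ u = (2 * u - 1) / (u ^ τ * (1 - u) ^ τ)) :
    Tendsto ψ (nhdsWithin 0 (Ioi 0)) atBot := by
  have hφ : Tendsto (φf τ) (nhdsWithin 0 (Ioi 0)) atBot := by
    apply Tendsto.neg_mul_atTop (show (-1:ℝ) < 0 by norm_num)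
    · have : ContinuousAt (fun u : ℝ => 2*u-1) 0 := by fun_prop
      have h := this.tendsto.mono_left (nhdsWithin_le_nhds (s := Ioi 0))
      norm_num at h; exact h
    · exact (rpow_neg_tendsto_atTop hτ).comp v_tendsto_zero_right
  apply hφ.congr'
  filter_upwards [Ioo_mem_nhdsGT (by norm_num : (0:ℝ) < 1)] with u hu
  exact (psi_eq hψ hu).symm

lemma psi_tendsto_top (hτ : 0 < τ)
    (hψ : ∀ u : ℝ, ψ u = (2 * u - 1) / (u ^ τ * (1 - u) ^ τ)) :
    Tendsto ψ (nhdsWithin 1 (Iio 1)) atTop := by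
  have hφ : Tendsto (φf τ) (nhdsWithin 1 (Iio 1)) atTop := by
    apply Tendsto.pos_mul_atTop (show (0:ℝ) < 1 by norm_num)
    · have : ContinuousAt (fun u : ℝ => 2*u-1) 1 := by fun_prop
      have h := this.tendsto.mono_left (nhdsWithin_le_nhds (s := Iio (1:ℝ)))
      norm_num at h; exact h
    · exact (rpow_neg_tendsto_atTop hτ).comp v_tendsto_zero_left
  apply hφ.congr'
  filter_upwards [Ioo_mem_nhdsLT (by norm_num : (0:ℝ) < 1)] with u hu
  exact (psi_eq hψ hu).symm

lemma psi_cocompact_right (hτ : 0 < τ)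
    (hψ : ∀ u : ℝ, ψ u = (2 * u - 1) / (u ^ τ * (1 - u) ^ τ)) :
    Tendsto ψ (nhdsWithin 0 (Ioi 0)) (cocompact ℝ) := by
  rw [cocompact_eq_atBot_atTop]
  exact (psi_tendsto_bot hτ hψ).mono_right le_sup_left

lemma psi_cocompact_left (hτ : 0 < τ)
    (hψ : ∀ u : ℝ, ψ u = (2 * u - 1) / (u ^ τ * (1 - u) ^ τ)) :
    Tendsto ψ (nhdsWithin 1 (Iio 1)) (cocompact ℝ) := by
  rw [cocompact_eq_atBot_atTop]
  exact (psi_tendsto_top hτ hψ).mono_right le_sup_right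

lemma hev_right : ∀ᶠ u in nhdsWithin (0:ℝ) (Ioi 0), u ∈ Ioo (0:ℝ) 1 ∧ 1/2 ≤ |2*u-1| := by
  filter_upwards [Ioo_mem_nhdsGT (by norm_num : (0:ℝ) < 1/4)] with u hu
  refine ⟨⟨hu.1, by nlinarith [hu.2]⟩, ?_⟩
  rw [abs_of_nonpos (by nlinarith [hu.2])]
  nlinarith [hu.2]

lemma hev_left : ∀ᶠ u in nhdsWithin (1:ℝ) (Iio 1), u ∈ Ioo (0:ℝ) 1 ∧ 1/2 ≤ |2*u-1| := by
  filter_upwards [Ioo_mem_nhdsLT (by norm_num : (3/4:ℝ) < 1)] with u hu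
  refine ⟨⟨by nlinarith [hu.1], hu.2⟩, ?_⟩
  rw [abs_of_nonneg (by nlinarith [hu.1])]
  nlinarith [hu.1]

lemma dd_tendsto_right (hτ : 0 < τ)
    (hψ : ∀ u : ℝ, ψ u = (2 * u - 1) / (u ^ τ * (1 - u) ^ τ))
    (hdecay : ∀ c : ℝ, 0 < c → ∀ a : ℕ, a ≤ r →
      Tendsto (fun x => |x| ^ c * |iteratedDeriv a g x|) (cocompact ℝ) (nhds 0))
    (k : ℕ) (hk : k ≤ r) :
    Tendsto (dd g ψ τ k) (nhdsWithin 0 (Ioi 0)) (nhds 0) :=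
  sum_tendsto _ _ _ (fun t ht => eval_tendsto0 hτ hψ hdecay t
    (le_trans (mem_LL_a_le τ k t ht) hk) hev_right (psi_cocompact_right hτ hψ))

lemma dd_tendsto_left (hτ : 0 < τ)
    (hψ : ∀ u : ℝ, ψ u = (2 * u - 1) / (u ^ τ * (1 - u) ^ τ))
    (hdecay : ∀ c : ℝ, 0 < c → ∀ a : ℕ, a ≤ r →
      Tendsto (fun x => |x| ^ c * |iteratedDeriv a g x|) (cocompact ℝ) (nhds 0))
    (k : ℕ) (hk : k ≤ r) :
    Tendsto (dd g ψ τ k) (nhdsWithin 1 (Iio 1)) (nhds 0) :=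
  sum_tendsto _ _ _ (fun t ht => eval_tendsto0 hτ hψ hdecay t
    (le_trans (mem_LL_a_le τ k t ht) hk) hev_left (psi_cocompact_left hτ hψ))

lemma dd_hasDerivAt (hg : ContDiff ℝ (r : ℕ∞) g)
    (hψ : ∀ u : ℝ, ψ u = (2 * u - 1) / (u ^ τ * (1 - u) ^ τ))
    (k : ℕ) (hk : k < r) {u : ℝ} (hu : u ∈ Ioo (0:ℝ) 1) :
    HasDerivAt (dd g ψ τ k) (dd g ψ τ (k+1) u) u := by
  have h := sum_hasDerivAt (LL τ k) (fun t => t.eval g ψ)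
    (fun t => ((t.D τ).map (fun t' => t'.eval g ψ u)).sum) u
    (fun t ht => eval_hasDerivAt hg hψ t (lt_of_le_of_lt (mem_LL_a_le τ k t ht) hk) hu)
  have heq : dd g ψ τ (k+1) u = ((LL τ k).map
      (fun t => ((t.D τ).map (fun t' => t'.eval g ψ u)).sum)).sum := by
    rw [dd, LL, sum_bind_map]
  rw [heq]
  exact h

end main3
end Stmt17Aux

namespace Stmt17Aux

lemma sum_continuousAt (l : List Tm) (e : Tm → ℝ → ℝ) (u : ℝ)
    (h : ∀ t ∈ l, ContinuousAt (e t) u) :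
    ContinuousAt (fun x => (l.map (fun t => e t x)).sum) u := by
  induction l with
  | nil => simpa using continuousAt_const
  | cons t l ih =>
    simp only [List.map_cons, List.sum_cons]
    exact (h t (by simp)).add (ih (fun t' ht' => h t' (by simp [ht'])))

section main4
variable {r : ℕ} {τ : ℝ} {g ψ : ℝ → ℝ}

noncomputable def DD (g ψ : ℝ → ℝ) (τ : ℝ) (k : ℕ) : ℝ → ℝ :=
  (Ioo (0:ℝ) 1).indicator (dd g ψ τ k)

lemma DD_eq_of_mem {k : ℕ} {u : ℝ} (hu : u ∈ Ioo (0:ℝ) 1) :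
    DD g ψ τ k u = dd g ψ τ k u := indicator_of_mem hu _

lemma DD_eq_zero {k : ℕ} {u : ℝ} (hu : u ∉ Ioo (0:ℝ) 1) :
    DD g ψ τ k u = 0 := indicator_of_notMem hu _

lemma psi_continuousAt (hψ : ∀ u : ℝ, ψ u = (2 * u - 1) / (u ^ τ * (1 - u) ^ τ))
    {u : ℝ} (hu : u ∈ Ioo (0:ℝ) 1) : ContinuousAt ψ u := by
  have hv := hvpos hu
  have hφ : ContinuousAt (φf τ) u := by
    apply ContinuousAt.mul (by fun_prop)
    exact ContinuousAt.comp (x := u) (Real.continuousAt_rpow_const _ _ (Or.inl hv.ne'))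
      (g := fun x : ℝ => x ^ (-τ)) (f := fun x : ℝ => x * (1-x)) (by fun_prop)
  apply hφ.congr
  filter_upwards [isOpen_Ioo.mem_nhds hu] with x hx
  exact (psi_eq hψ hx).symm

lemma dd_continuousAt (hg : ContDiff ℝ (r : ℕ∞) g)
    (hψ : ∀ u : ℝ, ψ u = (2 * u - 1) / (u ^ τ * (1 - u) ^ τ))
    {k : ℕ} (hk : k ≤ r) {u : ℝ} (hu : u ∈ Ioo (0:ℝ) 1) :
    ContinuousAt (dd g ψ τ k) u := by
  have hv := hvpos hu
  apply sum_continuousAt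
  intro t ht
  have ha : t.a ≤ r := le_trans (mem_LL_a_le τ k t ht) hk
  have hiD : ContinuousAt (fun x => iteratedDeriv t.a g (ψ x)) u :=
    ((hg.continuous_iteratedDeriv t.a (by exact_mod_cast ha)).continuousAt).comp
      (psi_continuousAt hψ hu)
  have hr : ContinuousAt (fun x : ℝ => (x*(1-x)) ^ (-t.s)) u :=
    ContinuousAt.comp (x := u) (Real.continuousAt_rpow_const _ _ (Or.inl hv.ne'))
      (g := fun x : ℝ => x ^ (-t.s)) (f := fun x : ℝ => x * (1-x)) (by fun_prop)
  exact ((continuousAt_const.mul hiD).mul (by fun_prop)).mul hr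

end main4
end Stmt17Aux

namespace Stmt17Aux
section main5
variable {r : ℕ} {τ : ℝ} {g ψ : ℝ → ℝ}

variable (hτ : 0 < τ) (hg : ContDiff ℝ (r : ℕ∞) g)
  (hψ : ∀ u : ℝ, ψ u = (2 * u - 1) / (u ^ τ * (1 - u) ^ τ))
  (hdecay : ∀ c : ℝ, 0 < c → ∀ a : ℕ, a ≤ r →
      Tendsto (fun x => |x| ^ c * |iteratedDeriv a g x|) (cocompact ℝ) (nhds 0))

include hτ hg hψ hdecay

lemma DD_hasDerivAt {k : ℕ} (hk : k < r) (x : ℝ) :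
    HasDerivAt (DD g ψ τ k) (DD g ψ τ (k+1) x) x := by
  rcases lt_trichotomy x 0 with hx0 | rfl | hx0
  · -- x < 0
    have hmem : Iio (0:ℝ) ∈ nhds x := Iio_mem_nhds hx0
    have hne : x ∉ Ioo (0:ℝ) 1 := by intro h; rw [mem_Ioo] at h; linarith
    rw [DD_eq_zero hne]
    apply (hasDerivAt_const x (0:ℝ)).congr_of_eventuallyEq
    filter_upwards [hmem] with y hy
    exact DD_eq_zero (by intro h; rw [mem_Ioo] at h; simp at hy; linarith)
  · -- x = 0
    have hIci : HasDerivWithinAt (DD g ψ τ k) 0 (Ici 0) 0 := by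
      apply hasDerivWithinAt_Ici_of_tendsto_deriv (s := Ioo (0:ℝ) 1)
      · intro y hy
        exact (((dd_hasDerivAt hg hψ k hk hy).congr_of_eventuallyEq
          (by filter_upwards [isOpen_Ioo.mem_nhds hy] with z hz;
              exact DD_eq_of_mem hz)).differentiableAt).differentiableWithinAt
      · unfold ContinuousWithinAt
        rw [DD_eq_zero (by simp)]
        have h := (dd_tendsto_right hτ hψ hdecay k hk.le).mono_left
          (nhdsWithin_mono 0 (Ioo_subset_Ioi_self (a := 1)))
        apply h.congr'
        filter_upwards [self_mem_nhdsWithin] with u hu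
        exact (DD_eq_of_mem hu).symm
      · exact Ioo_mem_nhdsGT one_pos
      · have h := (dd_tendsto_right hτ hψ hdecay (k+1) hk).mono_left
          (le_refl (nhdsWithin 0 (Ioi 0)))
        apply h.congr'
        filter_upwards [Ioo_mem_nhdsGT one_pos] with u hu
        have hd : HasDerivAt (DD g ψ τ k) (dd g ψ τ (k+1) u) u :=
          (dd_hasDerivAt hg hψ k hk hu).congr_of_eventuallyEq
            (by filter_upwards [isOpen_Ioo.mem_nhds hu] with z hz; exact DD_eq_of_mem hz)
        exact (hd.deriv).symm ▸ rfl
    have hIic : HasDerivWithinAt (DD g ψ τ k) 0 (Iic 0) 0 := by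
      apply (hasDerivWithinAt_const (0:ℝ) (Iic (0:ℝ)) (0:ℝ)).congr
      · intro y hy
        exact DD_eq_zero (by intro h; rw [mem_Ioo] at h; simp at hy; linarith)
      · exact DD_eq_zero (by simp)
    have : HasDerivWithinAt (DD g ψ τ k) 0 (Ici 0 ∪ Iic 0) 0 := hIci.union hIic
    rw [DD_eq_zero (k := k+1) (by simp)]
    rw [show Ici (0:ℝ) ∪ Iic 0 = univ by simp [Set.eq_univ_iff_forall, le_total]] at this
    exact this.hasDerivAt (by simp)
  · rcases lt_trichotomy x 1 with hx1 | rfl | hx1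
    · -- x ∈ Ioo 0 1
      have hx : x ∈ Ioo (0:ℝ) 1 := ⟨hx0, hx1⟩
      rw [DD_eq_of_mem hx]
      exact (dd_hasDerivAt hg hψ k hk hx).congr_of_eventuallyEq
        (by filter_upwards [isOpen_Ioo.mem_nhds hx] with z hz; exact DD_eq_of_mem hz)
    · -- x = 1
      have hIic : HasDerivWithinAt (DD g ψ τ k) 0 (Iic 1) 1 := by
        apply hasDerivWithinAt_Iic_of_tendsto_deriv (s := Ioo (0:ℝ) 1)
        · intro y hy
          exact (((dd_hasDerivAt hg hψ k hk hy).congr_of_eventuallyEq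
            (by filter_upwards [isOpen_Ioo.mem_nhds hy] with z hz;
                exact DD_eq_of_mem hz)).differentiableAt).differentiableWithinAt
        · unfold ContinuousWithinAt
          rw [DD_eq_zero (by simp)]
          have h := (dd_tendsto_left hτ hψ hdecay k hk.le).mono_left
            (nhdsWithin_mono 1 (Ioo_subset_Iio_self (a := 0)))
          apply h.congr'
          filter_upwards [self_mem_nhdsWithin] with u hu
          exact (DD_eq_of_mem hu).symm
        · exact Ioo_mem_nhdsLT one_pos
        · have h := dd_tendsto_left hτ hψ hdecay (k+1) hk
          apply h.congr'
          filter_upwards [Ioo_mem_nhdsLT one_pos] with u hu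
          have hd : HasDerivAt (DD g ψ τ k) (dd g ψ τ (k+1) u) u :=
            (dd_hasDerivAt hg hψ k hk hu).congr_of_eventuallyEq
              (by filter_upwards [isOpen_Ioo.mem_nhds hu] with z hz; exact DD_eq_of_mem hz)
          exact (hd.deriv).symm ▸ rfl
      have hIci : HasDerivWithinAt (DD g ψ τ k) 0 (Ici 1) 1 := by
        apply (hasDerivWithinAt_const (1:ℝ) (Ici (1:ℝ)) (0:ℝ)).congr
        · intro y hy
          exact DD_eq_zero (by intro h; rw [mem_Ioo] at h; simp at hy; linarith)
        · exact DD_eq_zero (by simp)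
      have h := hIic.union hIci
      rw [DD_eq_zero (k := k+1) (by simp)]
      rw [show Iic (1:ℝ) ∪ Ici 1 = univ by simp [Set.eq_univ_iff_forall, le_total]] at h
      exact h.hasDerivAt (by simp)
    · -- x > 1
      have hmem : Ioi (1:ℝ) ∈ nhds x := Ioi_mem_nhds hx1
      have hne : x ∉ Ioo (0:ℝ) 1 := by intro h; rw [mem_Ioo] at h; linarith
      rw [DD_eq_zero (k := k+1) hne]
      apply (hasDerivAt_const x (0:ℝ)).congr_of_eventuallyEq
      filter_upwards [hmem] with y hy
      exact DD_eq_zero (by intro h; rw [mem_Ioo] at h; simp at hy; linarith)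

end main5
end Stmt17Aux

namespace Stmt17Aux
section main6
variable {r : ℕ} {τ : ℝ} {g ψ : ℝ → ℝ}

variable (hτ : 0 < τ) (hg : ContDiff ℝ (r : ℕ∞) g)
  (hψ : ∀ u : ℝ, ψ u = (2 * u - 1) / (u ^ τ * (1 - u) ^ τ))
  (hdecay : ∀ c : ℝ, 0 < c → ∀ a : ℕ, a ≤ r →
      Tendsto (fun x => |x| ^ c * |iteratedDeriv a g x|) (cocompact ℝ) (nhds 0))

include hτ hg hψ hdecay

lemma DD_continuous {k : ℕ} (hk : k ≤ r) : Continuous (DD g ψ τ k) := by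
  rw [continuous_iff_continuousAt]
  intro x
  rcases lt_trichotomy x 0 with hx0 | rfl | hx0
  · apply continuousAt_const.congr
    filter_upwards [Iio_mem_nhds hx0] with y hy
    refine (DD_eq_zero ?_).symm
    intro h; rw [mem_Ioo] at h; simp at hy; linarith
  · -- x = 0
    have h1 : ContinuousWithinAt (DD g ψ τ k) (Iic 0) 0 := by
      apply (continuousWithinAt_const (b := (0:ℝ))).congr
      · intro y hy
        exact DD_eq_zero (by intro h; rw [mem_Ioo] at h; simp at hy; linarith)
      · exact DD_eq_zero (by simp)
    have h2 : ContinuousWithinAt (DD g ψ τ k) (Ioi 0) 0 := by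
      unfold ContinuousWithinAt
      rw [DD_eq_zero (by simp)]
      apply (dd_tendsto_right hτ hψ hdecay k hk).congr'
      filter_upwards [Ioo_mem_nhdsGT one_pos] with u hu
      exact (DD_eq_of_mem hu).symm
    have h := h1.union h2
    rw [show Iic (0:ℝ) ∪ Ioi 0 = univ by
      ext y; simp [le_or_gt]] at h
    rwa [continuousWithinAt_univ] at h
  · rcases lt_trichotomy x 1 with hx1 | rfl | hx1
    · exact (dd_continuousAt hg hψ hk ⟨hx0, hx1⟩).congr
        (by filter_upwards [isOpen_Ioo.mem_nhds (⟨hx0, hx1⟩ : x ∈ Ioo (0:ℝ) 1)] with z hz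
            exact (DD_eq_of_mem hz).symm)
    · have h1 : ContinuousWithinAt (DD g ψ τ k) (Ici 1) 1 := by
        apply (continuousWithinAt_const (b := (0:ℝ))).congr
        · intro y hy
          exact DD_eq_zero (by intro h; rw [mem_Ioo] at h; simp at hy; linarith)
        · exact DD_eq_zero (by simp)
      have h2 : ContinuousWithinAt (DD g ψ τ k) (Iio 1) 1 := by
        unfold ContinuousWithinAt
        rw [DD_eq_zero (by simp)]
        apply (dd_tendsto_left hτ hψ hdecay k hk).congr'
        filter_upwards [Ioo_mem_nhdsLT one_pos] with u hu
        exact (DD_eq_of_mem hu).symm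
      have h := h1.union h2
      rw [show Ici (1:ℝ) ∪ Iio 1 = univ by
        ext y; simp [le_or_gt]] at h
      rwa [continuousWithinAt_univ] at h
    · apply continuousAt_const.congr
      filter_upwards [Ioi_mem_nhds hx1] with y hy
      refine (DD_eq_zero ?_).symm
      intro h; rw [mem_Ioo] at h; simp at hy; linarith

lemma DD_contDiff {j : ℕ} (hj : j ≤ r) : ContDiff ℝ (j : ℕ∞) (DD g ψ τ (r - j)) := by
  induction j with
  | zero =>
    rw [show ((0:ℕ) : ℕ∞) = 0 by rfl]
    exact contDiff_zero.mpr (DD_continuous hτ hg hψ hdecay (by omega))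
  | succ j ih =>
    have hj' : j ≤ r := by omega
    have hlt : r - (j+1) < r := by omega
    have hder : ∀ x, HasDerivAt (DD g ψ τ (r - (j+1))) (DD g ψ τ (r - j) x) x := by
      intro x
      have := DD_hasDerivAt hτ hg hψ hdecay (k := r - (j+1)) hlt x
      rwa [show r - (j+1) + 1 = r - j by omega] at this
    have : ContDiff ℝ ((j : ℕ) + 1 : WithTop ℕ∞) (DD g ψ τ (r - (j+1))) := by
      rw [contDiff_succ_iff_deriv]
      refine ⟨fun x => (hder x).differentiableAt, by simp, ?_⟩
      have hdeq : deriv (DD g ψ τ (r - (j+1))) = DD g ψ τ (r - j) :=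
        funext fun x => (hder x).deriv
      rw [hdeq]
      exact_mod_cast ih hj'
    exact_mod_cast this

lemma DD_iteratedDeriv {a : ℕ} (ha : a ≤ r) :
    iteratedDeriv a (DD g ψ τ 0) = DD g ψ τ a := by
  induction a with
  | zero => simp [iteratedDeriv_zero]
  | succ a ih =>
    rw [iteratedDeriv_succ, ih (by omega)]
    exact funext fun x => (DD_hasDerivAt hτ hg hψ hdecay (by omega) x).deriv

end main6
end Stmt17Aux

namespace Stmt17Aux

lemma iteratedDerivWithin_eq_global {n : ℕ∞} {F : ℝ → ℝ} (hF : ContDiff ℝ n F)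
    {a : ℕ} (ha : (a : ℕ∞) ≤ n) {s : Set ℝ} (hs : UniqueDiffOn ℝ s) {x : ℝ} (hx : x ∈ s) :
    iteratedDerivWithin a F s x = iteratedDeriv a F x := by
  have h := (contDiff_iff_ftaylorSeries.mp hF).hasFTaylorSeriesUpToOn s
  have h2 := h.eq_iteratedFDerivWithin_of_uniqueDiffOn (m := a) (by exact_mod_cast ha) hs hx
  rw [iteratedDerivWithin_eq_iteratedFDerivWithin, iteratedDeriv_eq_iteratedFDeriv, ← h2]
  rfl

end Stmt17Aux

namespace Stmt17Aux
section main7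
variable {r : ℕ} {τ : ℝ} {g ψ ψ' : ℝ → ℝ}

lemma psi_hasDerivAt (hψ : ∀ u : ℝ, ψ u = (2 * u - 1) / (u ^ τ * (1 - u) ^ τ))
    (hψ' : ∀ u : ℝ, ψ' u =
      2 / (u ^ τ * (1 - u) ^ τ) +
        τ * (2 * u - 1) ^ 2 / (u ^ (τ + 1) * (1 - u) ^ (τ + 1)))
    {u : ℝ} (hu : u ∈ Ioo (0:ℝ) 1) : HasDerivAt ψ (ψ' u) u := by
  rw [psi'_eq hψ' hu]
  exact (phi_hasDeriv hu).congr_of_eventuallyEq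
    (by filter_upwards [isOpen_Ioo.mem_nhds hu] with x hx; exact psi_eq hψ hx)

lemma psi'_pos (hτ : 0 < τ)
    (hψ' : ∀ u : ℝ, ψ' u =
      2 / (u ^ τ * (1 - u) ^ τ) +
        τ * (2 * u - 1) ^ 2 / (u ^ (τ + 1) * (1 - u) ^ (τ + 1)))
    {u : ℝ} (hu : u ∈ Ioo (0:ℝ) 1) : 0 < ψ' u := by
  have hv := hvpos hu
  rw [psi'_eq hψ' hu, φf']
  have h1 : (0:ℝ) < (u*(1-u)) ^ (-τ) := Real.rpow_pos_of_pos hv _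
  have h2 : (0:ℝ) ≤ τ*(2*u-1)^2*(u*(1-u))^(-(τ+1)) := by positivity
  nlinarith

lemma psi_strictMonoOn (hτ : 0 < τ)
    (hψ : ∀ u : ℝ, ψ u = (2 * u - 1) / (u ^ τ * (1 - u) ^ τ))
    (hψ' : ∀ u : ℝ, ψ' u =
      2 / (u ^ τ * (1 - u) ^ τ) +
        τ * (2 * u - 1) ^ 2 / (u ^ (τ + 1) * (1 - u) ^ (τ + 1))) :
    StrictMonoOn ψ (Ioo (0:ℝ) 1) := by
  apply strictMonoOn_of_deriv_pos (convex_Ioo 0 1)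
  · exact fun x hx => ((psi_hasDerivAt hψ hψ' hx).continuousAt).continuousWithinAt
  · intro x hx
    rw [interior_Ioo] at hx
    rw [(psi_hasDerivAt hψ hψ' hx).deriv]
    exact psi'_pos hτ hψ' hx

lemma psi_image (hτ : 0 < τ)
    (hψ : ∀ u : ℝ, ψ u = (2 * u - 1) / (u ^ τ * (1 - u) ^ τ))
    (hψ' : ∀ u : ℝ, ψ' u =
      2 / (u ^ τ * (1 - u) ^ τ) +
        τ * (2 * u - 1) ^ 2 / (u ^ (τ + 1) * (1 - u) ^ (τ + 1))) :
    ψ '' Ioo (0:ℝ) 1 = univ := by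
  apply subset_antisymm (subset_univ _)
  intro y _
  obtain ⟨a, hay, ha⟩ := (((psi_tendsto_bot hτ hψ).eventually (eventually_lt_atBot y)).and
    (Ioo_mem_nhdsGT (show (0:ℝ) < 1/2 by norm_num))).exists
  obtain ⟨b, hby, hb⟩ := (((psi_tendsto_top hτ hψ).eventually (eventually_gt_atTop y)).and
    (Ioo_mem_nhdsLT (show (1/2:ℝ) < 1 by norm_num))).exists
  have hab : a ≤ b := by linarith [ha.2, hb.1]
  have hsub : Icc a b ⊆ Ioo (0:ℝ) 1 := fun x hx =>
    ⟨lt_of_lt_of_le ha.1 hx.1, lt_of_le_of_lt hx.2 hb.2⟩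
  have hcont : ContinuousOn ψ (Icc a b) := fun x hx =>
    ((psi_hasDerivAt hψ hψ' (hsub hx)).continuousAt).continuousWithinAt
  have h := intermediate_value_Icc hab hcont
  have hy : y ∈ Icc (ψ a) (ψ b) := ⟨hay.le, hby.le⟩
  obtain ⟨x, hx, hxy⟩ := h hy
  exact ⟨x, hsub hx, hxy⟩

lemma dd0_eq (hψ' : ∀ u : ℝ, ψ' u =
      2 / (u ^ τ * (1 - u) ^ τ) +
        τ * (2 * u - 1) ^ 2 / (u ^ (τ + 1) * (1 - u) ^ (τ + 1)))
    {u : ℝ} (hu : u ∈ Ioo (0:ℝ) 1) :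
    dd g ψ τ 0 u = g (ψ u) * ψ' u := by
  simp only [dd, LL, Tm.eval, List.map_cons, List.map_nil, List.sum_cons, List.sum_nil,
    iteratedDeriv_zero]
  rw [psi'_eq hψ' hu, φf']
  ring

end main7
end Stmt17Aux

open Stmt17Aux in
/-- Transforming an integral over `ℝ` into the integral of a vanishing function on `[0,1]`:
if `g ∈ C^r(ℝ) ∩ L₁(ℝ)` satisfies `|x|^c |g^{(a)}(x)| → 0` as `|x| → ∞` for all `c > 0`
and `0 ≤ a ≤ r`, and `ψ₁(u) = (2u-1)/(u^τ(1-u)^τ)` for some `τ > 0`, then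
`f(u) = g(ψ₁(u)) ψ₁'(u)` on `(0,1)` extends to a function `F ∈ C^r_0([0,1])` (i.e. `F` and
all its derivatives up to order `r` vanish at `0` and `1`) with `∫_0^1 F = ∫_ℝ g`. -/
theorem stmt_17 (r : ℕ) (hr : 1 ≤ r) (τ : ℝ) (hτ : 0 < τ)
    (g : ℝ → ℝ) (hg : ContDiff ℝ (r : ℕ∞) g) (hint : MeasureTheory.Integrable g)
    (hdecay : ∀ c : ℝ, 0 < c → ∀ a : ℕ, a ≤ r →
      Tendsto (fun x => |x| ^ c * |iteratedDeriv a g x|) (cocompact ℝ) (nhds 0))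
    (ψ ψ' : ℝ → ℝ)
    (hψ : ∀ u : ℝ, ψ u = (2 * u - 1) / (u ^ τ * (1 - u) ^ τ))
    (hψ' : ∀ u : ℝ, ψ' u =
      2 / (u ^ τ * (1 - u) ^ τ) +
        τ * (2 * u - 1) ^ 2 / (u ^ (τ + 1) * (1 - u) ^ (τ + 1))) :
    ∃ F : ℝ → ℝ, ContDiffOn ℝ (r : ℕ∞) F (Set.Icc 0 1) ∧
      (∀ u ∈ Set.Ioo (0 : ℝ) 1, F u = g (ψ u) * ψ' u) ∧
      (∀ a : ℕ, a ≤ r → iteratedDerivWithin a F (Set.Icc 0 1) 0 = 0 ∧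
        iteratedDerivWithin a F (Set.Icc 0 1) 1 = 0) ∧
      ∫ u in Set.Icc (0 : ℝ) 1, F u = ∫ x, g x := by

  refine ⟨DD g ψ τ 0, ?_, ?_, ?_, ?_⟩
  · have h := DD_contDiff hτ hg hψ hdecay (j := r) le_rfl
    rw [Nat.sub_self] at h
    exact h.contDiffOn
  · intro u hu
    rw [DD_eq_of_mem hu, dd0_eq hψ' hu]
  · intro a ha
    have hF : ContDiff ℝ (r : ℕ∞) (DD g ψ τ 0) := by
      have h := DD_contDiff hτ hg hψ hdecay (j := r) le_rfl
      rwa [Nat.sub_self] at h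
    constructor
    · rw [iteratedDerivWithin_eq_global hF (by exact_mod_cast ha) (uniqueDiffOn_Icc one_pos)
        (Set.mem_Icc.mpr ⟨le_refl 0, zero_le_one⟩),
        DD_iteratedDeriv hτ hg hψ hdecay ha]
      exact DD_eq_zero (by simp)
    · rw [iteratedDerivWithin_eq_global hF (by exact_mod_cast ha) (uniqueDiffOn_Icc one_pos)
        (Set.mem_Icc.mpr ⟨zero_le_one, le_refl 1⟩),
        DD_iteratedDeriv hτ hg hψ hdecay ha]
      exact DD_eq_zero (by simp)
  · have hderivW : ∀ x ∈ Set.Ioo (0:ℝ) 1, HasDerivWithinAt ψ (ψ' x) (Set.Ioo 0 1) x :=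
      fun x hx => (psi_hasDerivAt hψ hψ' hx).hasDerivWithinAt
    have hinj := (psi_strictMonoOn hτ hψ hψ').injOn
    have hcv := MeasureTheory.integral_image_eq_integral_abs_deriv_smul
      measurableSet_Ioo hderivW hinj g
    rw [psi_image hτ hψ hψ', MeasureTheory.setIntegral_univ] at hcv
    calc ∫ u in Set.Icc (0:ℝ) 1, DD g ψ τ 0 u
        = ∫ u in Set.Ioo (0:ℝ) 1, DD g ψ τ 0 u := MeasureTheory.integral_Icc_eq_integral_Ioo
      _ = ∫ u in Set.Ioo (0:ℝ) 1, |ψ' u| • g (ψ u) :=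
          MeasureTheory.setIntegral_congr_fun measurableSet_Ioo (fun u hu => by
            rw [DD_eq_of_mem hu, dd0_eq hψ' hu, abs_of_pos (psi'_pos hτ hψ' hu), smul_eq_mul]
            ring)
      _ = ∫ x, g x := hcv.symm
end
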